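/- arXiv:1311.2563 — 4 statements merged into one kernel-verified Lean document; each statement's English description precedes it below -/
import Mathlib

section
/- Let G be a finite simple graph, A ⊆ V(G), and q, k nonnegative integers. Then A is (q,k)-breakable in G if and only if there exist disjoint sets X₀, Y₀ ⊆ A with |X₀| = |Y₀| = q+1 and a set Z ⊆ V(G) ∖ (X₀ ∪ Y₀) with |Z| ≤ k such that Z is an X₀–Y₀ separator in G. -/
open SimpleGraph

variable {V : Type*}

/-- The open neighbourhood `N_G(C)` of a vertex set `C`:
vertices outside `C` with a neighbour in `C`. -/
def setNbhd (G : SimpleGraph V) (C : Set V) : Set V :=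
  {v | v ∉ C ∧ ∃ u ∈ C, G.Adj u v}

/-- The closed neighbourhood `N_G[C] = C ∪ N_G(C)`. -/
def closedNbhd (G : SimpleGraph V) (C : Set V) : Set V :=
  C ∪ setNbhd G C

/-- `W` is `(q,k)`-unbreakable in the induced subgraph `G[U]`:
every separation `(A,B)` of `G[U]` of order at most `k` has
`|(A∖B) ∩ W| ≤ q` or `|(B∖A) ∩ W| ≤ q`. -/
def UnbreakableIn (G : SimpleGraph V) (U W : Set V) (q k : ℕ) : Prop :=
  ∀ A B : Set V, A ∪ B = U →
    (∀ a ∈ A \ B, ∀ b ∈ B \ A, ¬ G.Adj a b) →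
    (A ∩ B).ncard ≤ k →
    ((A \ B) ∩ W).ncard ≤ q ∨ ((B \ A) ∩ W).ncard ≤ q

/-- `W` is `(q,k)`-unbreakable in `G`. -/
def Unbreakable (G : SimpleGraph V) (W : Set V) (q k : ℕ) : Prop :=
  UnbreakableIn G Set.univ W q k

/-- `x` and `y` lie in the same connected component of `G − W`. -/
def ReachAvoid (G : SimpleGraph V) (W : Set V) (x y : V) : Prop :=
  ∃ (hx : x ∈ Wᶜ) (hy : y ∈ Wᶜ), (G.induce Wᶜ).Reachable ⟨x, hx⟩ ⟨y, hy⟩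

/-- `W` is an `X–Y` separator: no connected component of `G − W` contains
a vertex of `X∖W` and a vertex of `Y∖W`. -/
def IsSeparator (G : SimpleGraph V) (X Y W : Set V) : Prop :=
  ∀ x ∈ X \ W, ∀ y ∈ Y \ W, ¬ ReachAvoid G W x y

/-- `R_{G−W}(X∖W)`: the set of vertices reachable from `X∖W` in `G − W`. -/
def reachSet (G : SimpleGraph V) (W X : Set V) : Set V :=
  {y | ∃ x ∈ X \ W, ReachAvoid G W x y}

/-- `W` is an important `X–Y` separator. -/
def IsImportantSeparator (G : SimpleGraph V) (X Y W : Set V) : Prop :=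
  IsSeparator G X Y W ∧
  (∀ W' ⊆ W, IsSeparator G X Y W' → W' = W) ∧
  ∀ W' : Set V, IsSeparator G X Y W' → W'.ncard ≤ W.ncard →
    ¬ reachSet G W X ⊂ reachSet G W' X

/-- A chip (w.r.t. `G`, `k` and `S`): `G[C]` is connected, `|N_G(C)| ≤ 3k`,
and `N_G(C)` is an important `C–S` separator. -/
def IsChip (G : SimpleGraph V) (k : ℕ) (S C : Set V) : Prop :=
  (G.induce C).Connected ∧ (setNbhd G C).ncard ≤ 3 * k ∧
  IsImportantSeparator G C S (setNbhd G C)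

/-- The family of all inclusion-wise maximal chips. -/
def maximalChips (G : SimpleGraph V) (k : ℕ) (S : Set V) : Set (Set V) :=
  {C | IsChip G k S C ∧ ∀ C', IsChip G k S C' → C ⊆ C' → C' = C}

/-- Two vertex sets touch: they intersect or some edge joins them. -/
def Touches (G : SimpleGraph V) (C₁ C₂ : Set V) : Prop :=
  (C₁ ∩ C₂).Nonempty ∨ ∃ u ∈ C₁, ∃ v ∈ C₂, G.Adj u v

/-- `D` is a connected component of `G − A`: a maximal set disjoint from `A`
inducing a connected subgraph. -/
def IsCompOf (G : SimpleGraph V) (A D : Set V) : Prop :=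
  D ⊆ Aᶜ ∧ (G.induce D).Connected ∧
  ∀ D', D ⊆ D' → D' ⊆ Aᶜ → (G.induce D').Connected → D' = D

/-- The set `A = (⋂_{C ∈ 𝒞} V(G) ∖ N[C]) ∪ ⋃_{C ∈ 𝒞} N(C)` built from the
maximal chips (equals `V(G)` when there are no chips). -/
def chipBag (G : SimpleGraph V) (k : ℕ) (S : Set V) : Set V :=
  (⋂ C ∈ maximalChips G k S, (closedNbhd G C)ᶜ) ∪
    ⋃ C ∈ maximalChips G k S, setNbhd G C

/-- `η(k) = 3k·(3k·4^{3k}+1)`. -/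
def etaB (k : ℕ) : ℕ := 3 * k * (3 * k * 4 ^ (3 * k) + 1)

/-- `τ(k) = (3k)²·8^{3k} + 2k`. -/
def tauB (k : ℕ) : ℕ := (3 * k) ^ 2 * 8 ^ (3 * k) + 2 * k

/-- `τ′(k) = τ + (C(τ+k,2)·k + k)·k·η`. -/
def tauB' (k : ℕ) : ℕ :=
  tauB k + ((tauB k + k).choose 2 * k + k) * k * etaB k

/-- The tree graph determined by a parent function. -/
def parentGraph {T : Type*} (parent : T → T) : SimpleGraph T where
  Adj t s := t ≠ s ∧ (parent t = s ∨ parent s = t)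
  symm := by constructor; intro t s h; exact ⟨h.1.symm, h.2.symm⟩
  loopless := by constructor; intro t h; exact h.1 rfl

/-- The descendants of `t` (including `t` itself). -/
def descSet {T : Type*} (parent : T → T) (t : T) : Set T :=
  {u | ∃ n : ℕ, parent^[n] u = t}

/-- `γ(t) = ⋃_{u ⪯ t} β(u)`. -/
def gammaSet {T : Type*} (parent : T → T) (β : T → Set V) (t : T) : Set V :=
  ⋃ u ∈ descSet parent t, β u

/-- `σ(t) = ∅` for the root, `β(t) ∩ β(parent t)` otherwise. -/
def sigmaSet {T : Type*} [DecidableEq T] (root : T) (parent : T → T)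
    (β : T → Set V) (t : T) : Set V :=
  if t = root then ∅ else β t ∩ β (parent t)

/-- `(T,β)` (a rooted tree given by `root` and `parent`, with bags `β`)
is a tree decomposition of `G`. -/
structure IsTreeDecomp (G : SimpleGraph V) {T : Type*} (root : T) (parent : T → T)
    (β : T → Set V) : Prop where
  parent_root : parent root = root
  reaches_root : ∀ t : T, ∃ n : ℕ, parent^[n] t = root
  bags_connected : ∀ v : V, ((parentGraph parent).induce {t | v ∈ β t}).Connected
  edge_in_bag : ∀ u v : V, G.Adj u v → ∃ t : T, u ∈ β t ∧ v ∈ β t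

lemma reachAvoid_refl {G : SimpleGraph V} {Z : Set V} {x : V} (hx : x ∈ Zᶜ) :
    ReachAvoid G Z x x := ⟨hx, hx, Reachable.refl _⟩

lemma reachAvoid_adj {G : SimpleGraph V} {Z : Set V} {x y b : V}
    (h : ReachAvoid G Z x y) (hb : b ∈ Zᶜ) (hadj : G.Adj y b) :
    ReachAvoid G Z x b := by
  obtain ⟨hx, hy, hr⟩ := h
  exact ⟨hx, hb, hr.trans (SimpleGraph.Adj.reachable
    (show (G.induce Zᶜ).Adj ⟨y, hy⟩ ⟨b, hb⟩ from hadj))⟩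

lemma walk_confine {G : SimpleGraph V} {S P : Set V}
    (hP : ∀ a ∈ P, ∀ b ∈ S, b ∉ P → ¬ G.Adj a b) :
    ∀ {x y : ↥S}, (G.induce S).Walk x y → (x : V) ∈ P → (y : V) ∈ P := by
  intro x y w
  induction w with
  | nil => exact id
  | @cons u v w h p ih =>
    intro hx
    apply ih
    by_contra hz
    exact hP _ hx _ v.2 hz h

/-- characterization of `(q,k)`-breakability (Lemma 2.7). -/
theorem breakable_iff_separator {V : Type*} [Fintype V] [DecidableEq V]
    (G : SimpleGraph V) (A : Set V) (q k : ℕ) :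
    ¬ Unbreakable G A q k ↔
      ∃ X₀ Y₀ Z : Set V,
        X₀ ⊆ A ∧ Y₀ ⊆ A ∧ Disjoint X₀ Y₀ ∧
        X₀.ncard = q + 1 ∧ Y₀.ncard = q + 1 ∧
        Z ⊆ (X₀ ∪ Y₀)ᶜ ∧ Z.ncard ≤ k ∧ IsSeparator G X₀ Y₀ Z := by
  constructor
  · intro h
    unfold Unbreakable UnbreakableIn at h
    push_neg at h
    obtain ⟨A', B', hU, hE, hk, hA, hB⟩ := h
    obtain ⟨X₀, hX₀sub, hX₀card⟩ := Set.exists_subset_card_eq (show q + 1 ≤ _ from hA)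
    obtain ⟨Y₀, hY₀sub, hY₀card⟩ := Set.exists_subset_card_eq (show q + 1 ≤ _ from hB)
    have hX₀ : X₀ ⊆ A' \ B' := fun x hx => (hX₀sub hx).1
    have hY₀ : Y₀ ⊆ B' \ A' := fun y hy => (hY₀sub hy).1
    refine ⟨X₀, Y₀, A' ∩ B', fun x hx => (hX₀sub hx).2, fun y hy => (hY₀sub hy).2,
      ?_, hX₀card, hY₀card, ?_, hk, ?_⟩
    · rw [Set.disjoint_left]
      intro a haX haY
      exact (hY₀ haY).2 (hX₀ haX).1
    · intro z hz
      simp only [Set.mem_compl_iff, Set.mem_union, not_or]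
      exact ⟨fun hzX => (hX₀ hzX).2 hz.2, fun hzY => (hY₀ hzY).2 hz.1⟩
    · rintro x hx y hy ⟨hxc, hyc, hr⟩
      have hP : ∀ a ∈ A' \ B', ∀ b ∈ (A' ∩ B')ᶜ, b ∉ A' \ B' → ¬ G.Adj a b := by
        intro a ha b hb hbP hadj
        have hbB : b ∈ B' \ A' := by
          have : b ∈ A' ∪ B' := by rw [hU]; trivial
          rcases this with hbA | hbB
          · exact absurd ⟨hbA, fun hbB => hb ⟨hbA, hbB⟩⟩ hbP
          · exact ⟨hbB, fun hbA => hb ⟨hbA, hbB⟩⟩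
        exact hE a ha b hbB hadj
      obtain ⟨w⟩ := hr
      have := walk_confine hP w (hX₀ hx.1)
      exact (hY₀ hy.1).2 this.1
  · rintro ⟨X₀, Y₀, Z, hXA, hYA, hdisj, hXc, hYc, hZc, hZk, hsep⟩ h
    set R := reachSet G Z X₀ with hR
    have hRZ : R ⊆ Zᶜ := by rintro y ⟨x, hx, _, hy, _⟩; exact hy
    have hXZ : ∀ x ∈ X₀, x ∉ Z := fun x hx hxZ => (hZc hxZ) (Or.inl hx)
    have hYZ : ∀ y ∈ Y₀, y ∉ Z := fun y hy hyZ => (hZc hyZ) (Or.inr hy)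
    have hXR : X₀ ⊆ R := fun x hx => ⟨x, ⟨hx, hXZ x hx⟩, reachAvoid_refl (hXZ x hx)⟩
    have hYnR : ∀ y ∈ Y₀, y ∉ R := by
      rintro y hy ⟨x, hx, hre⟩
      exact hsep x hx y ⟨hy, hYZ y hy⟩ hre
    have key := h (R ∪ Z) Rᶜ ?_ ?_ ?_
    · rcases key with h1 | h1
      · have : X₀ ⊆ ((R ∪ Z) \ Rᶜ) ∩ A := fun x hx =>
          ⟨⟨Or.inl (hXR hx), fun hc => hc (hXR hx)⟩, hXA hx⟩
        have := Set.ncard_le_ncard this (Set.toFinite _)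
        omega
      · have : Y₀ ⊆ (Rᶜ \ (R ∪ Z)) ∩ A := fun y hy =>
          ⟨⟨hYnR y hy, fun hc => hc.elim (hYnR y hy) (hYZ y hy)⟩, hYA hy⟩
        have := Set.ncard_le_ncard this (Set.toFinite _)
        omega
    · ext v
      simp only [Set.mem_union, Set.mem_univ, iff_true, Set.mem_compl_iff]
      tauto
    · rintro a ⟨haRZ, haR⟩ b ⟨hbR, hbRZ⟩ hadj
      simp only [Set.mem_compl_iff, not_not] at haR
      have hbZ : b ∉ Z := fun hbZ => hbRZ (Or.inr hbZ)
      obtain ⟨x, hx, hre⟩ := haR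
      exact hbR ⟨x, hx, reachAvoid_adj hre hbZ hadj⟩
    · have hEQ : (R ∪ Z) ∩ Rᶜ = Z := by
        ext v
        simp only [Set.mem_inter_iff, Set.mem_union, Set.mem_compl_iff]
        constructor
        · rintro ⟨hv | hv, hnR⟩ <;> tauto
        · intro hv
          exact ⟨Or.inr hv, fun hvR => hRZ hvR hv⟩
      rw [hEQ]
      exact hZk
end

section
/- Let G be a finite simple graph on n vertices, k a positive integer, and S ⊆ V(G). Then the family 𝒞 of all inclusion-wise maximal chips (with respect to G, k and S) has cardinality at most 4^{3k} · n. -/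
open SimpleGraph

variable {V : Type*}

namespace ChipAux

theorem raRefl {G : SimpleGraph V} {W : Set V} {x : V} (hx : x ∉ W) :
    ReachAvoid G W x x := ⟨hx, hx, SimpleGraph.Reachable.refl _⟩

theorem raSymm {G : SimpleGraph V} {W : Set V} {x y : V}
    (h : ReachAvoid G W x y) : ReachAvoid G W y x := by
  obtain ⟨hx, hy, hr⟩ := h; exact ⟨hy, hx, hr.symm⟩

theorem raTrans {G : SimpleGraph V} {W : Set V} {x y z : V}
    (h : ReachAvoid G W x y) (h' : ReachAvoid G W y z) : ReachAvoid G W x z := by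
  obtain ⟨hx, hy, hr⟩ := h; obtain ⟨hy', hz, hr'⟩ := h'
  exact ⟨hx, hz, hr.trans hr'⟩

theorem raLeft {G : SimpleGraph V} {W : Set V} {x y : V}
    (h : ReachAvoid G W x y) : x ∉ W := h.1

theorem raRight {G : SimpleGraph V} {W : Set V} {x y : V}
    (h : ReachAvoid G W x y) : y ∉ W := h.2.1

theorem raAdj {G : SimpleGraph V} {W : Set V} {x y : V}
    (ha : G.Adj x y) (hx : x ∉ W) (hy : y ∉ W) : ReachAvoid G W x y := by
  refine ⟨hx, hy, ?_⟩
  have : (G.induce Wᶜ).Adj ⟨x, hx⟩ ⟨y, hy⟩ := by simpa using ha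
  exact this.reachable

/-- Walk characterisation of `ReachAvoid`. -/
theorem reachAvoid_iff {G : SimpleGraph V} {W : Set V} {x y : V} :
    ReachAvoid G W x y ↔ ∃ p : G.Walk x y, ∀ z ∈ p.support, z ∉ W := by
  constructor
  · rintro ⟨hx, hy, hr⟩
    obtain ⟨q⟩ := hr
    refine ⟨(q.map (SimpleGraph.Embedding.induce Wᶜ).toHom), ?_⟩
    intro z hz
    erw [SimpleGraph.Walk.support_map] at hz
    obtain ⟨a, _, rfl⟩ := List.mem_map.mp hz
    exact a.2
  · rintro ⟨p, hp⟩
    induction p with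
    | nil => exact raRefl (hp _ (by simp))
    | @cons a b c hab q ih =>
      have h1 : ReachAvoid G W a b := raAdj hab (hp a (by simp)) (hp b (by simp))
      exact raTrans h1 (ih (fun z hz => hp z (by simp [hz])))

theorem raMono {G : SimpleGraph V} {W W' : Set V} {x y : V} (hW : W' ⊆ W)
    (h : ReachAvoid G W x y) : ReachAvoid G W' x y := by
  rw [reachAvoid_iff] at h ⊢
  obtain ⟨p, hp⟩ := h
  exact ⟨p, fun z hz hzW => hp z hz (hW hzW)⟩


/-! ### reachSet lemmas -/

theorem mem_reachSet_self {G : SimpleGraph V} {W X : Set V} {x : V}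
    (hx : x ∈ X) (hxW : x ∉ W) : x ∈ reachSet G W X :=
  ⟨x, ⟨hx, hxW⟩, raRefl hxW⟩

theorem reachSet_notMem_W {G : SimpleGraph V} {W X : Set V} {y : V}
    (hy : y ∈ reachSet G W X) : y ∉ W := by
  obtain ⟨x, _, h⟩ := hy; exact raRight h

theorem reachSet_trans {G : SimpleGraph V} {W X : Set V} {y z : V}
    (hy : y ∈ reachSet G W X) (h : ReachAvoid G W y z) : z ∈ reachSet G W X := by
  obtain ⟨x, hx, h'⟩ := hy; exact ⟨x, hx, raTrans h' h⟩

theorem reachSet_adj {G : SimpleGraph V} {W X : Set V} {y z : V}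
    (hy : y ∈ reachSet G W X) (ha : G.Adj y z) (hz : z ∉ W) : z ∈ reachSet G W X :=
  reachSet_trans hy (raAdj ha (reachSet_notMem_W hy) hz)

theorem diff_subset_reachSet {G : SimpleGraph V} {W X : Set V} :
    X \ W ⊆ reachSet G W X := fun x hx => mem_reachSet_self hx.1 hx.2

theorem reachSet_mono_W {G : SimpleGraph V} {W W' X : Set V} (h : W' ⊆ W) :
    reachSet G W X ⊆ reachSet G W' X := by
  rintro y ⟨x, hx, hr⟩
  exact ⟨x, ⟨hx.1, fun hc => hx.2 (h hc)⟩, raMono h hr⟩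

theorem reachSet_mono_X {G : SimpleGraph V} {W X X' : Set V} (h : X ⊆ X') :
    reachSet G W X ⊆ reachSet G W X' := by
  rintro y ⟨x, hx, hr⟩; exact ⟨x, ⟨h hx.1, hx.2⟩, hr⟩

/-- every vertex on a `W`-avoiding walk from a vertex of `X∖W` is in the reach set. -/
theorem support_subset_reachSet {G : SimpleGraph V} {W X : Set V} {x y : V}
    (hx : x ∈ reachSet G W X) (p : G.Walk x y) (hp : ∀ z ∈ p.support, z ∉ W) :
    ∀ z ∈ p.support, z ∈ reachSet G W X := by
  induction p with
  | nil => intro z hz; simp at hz; subst hz; exact hx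
  | @cons a b c hab q ih =>
    intro z hz
    have hb : b ∈ reachSet G W X := reachSet_adj hx hab (hp b (by simp))
    rcases List.mem_cons.mp (by simpa using hz) with rfl | hz'
    · exact hx
    · exact ih hb (fun w hw => hp w (by simp [hw])) z hz'

/-! ### separator characterisation -/

theorem isSeparator_iff_reach_disjoint {G : SimpleGraph V} {X Y W : Set V} :
    IsSeparator G X Y W ↔ ∀ y ∈ Y, y ∉ reachSet G W X := by
  constructor
  · rintro hsep y hy ⟨x, hx, hr⟩
    exact hsep x hx y ⟨hy, raRight hr⟩ hr
  · rintro h x hx y hy hr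
    exact h y hy.1 ⟨x, hx, hr⟩

theorem isSeparator_anti_X {G : SimpleGraph V} {X X' Y W : Set V} (h : X' ⊆ X)
    (hs : IsSeparator G X Y W) : IsSeparator G X' Y W :=
  fun x hx y hy => hs x ⟨h hx.1, hx.2⟩ y hy

/-! ### setNbhd lemmas -/

theorem mem_setNbhd {G : SimpleGraph V} {A : Set V} {v : V} :
    v ∈ setNbhd G A ↔ v ∉ A ∧ ∃ u ∈ A, G.Adj u v := Iff.rfl

theorem setNbhd_disjoint {G : SimpleGraph V} {A : Set V} : ∀ v ∈ setNbhd G A, v ∉ A :=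
  fun _ hv => hv.1

/-- closure step: a neighbour of `A` avoiding `setNbhd G A` is in `A`. -/
theorem mem_of_adj_avoid {G : SimpleGraph V} {A : Set V} {a b : V}
    (ha : a ∈ A) (hab : G.Adj a b) (hb : b ∉ setNbhd G A) : b ∈ A := by
  by_contra hbA
  exact hb ⟨hbA, a, ha, hab⟩

/-- stay lemma: a walk starting in `A` avoiding `setNbhd G A` stays in `A`. -/
theorem walk_stays {G : SimpleGraph V} {A : Set V} {x y : V}
    (hx : x ∈ A) (p : G.Walk x y) (hp : ∀ z ∈ p.support, z ∉ setNbhd G A) :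
    ∀ z ∈ p.support, z ∈ A := by
  induction p with
  | nil => intro z hz; simp at hz; subst hz; exact hx
  | @cons a b c hab q ih =>
    intro z hz
    have hb : b ∈ A := mem_of_adj_avoid hx hab (hp b (by simp))
    rcases List.mem_cons.mp (by simpa using hz) with rfl | hz'
    · exact hx
    · exact ih hb (fun w hw => hp w (by simp [hw])) z hz'

theorem reachAvoid_stays {G : SimpleGraph V} {A : Set V} {x y : V}
    (hx : x ∈ A) (h : ReachAvoid G (setNbhd G A) x y) : y ∈ A := by
  rw [reachAvoid_iff] at h
  obtain ⟨p, hp⟩ := h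
  exact walk_stays hx p hp y p.end_mem_support

theorem reachSet_nbhd_subset {G : SimpleGraph V} {A X : Set V} (hXA : X ⊆ A) :
    reachSet G (setNbhd G A) X ⊆ A := by
  rintro y ⟨x, hx, hr⟩
  exact reachAvoid_stays (hXA hx.1) hr

/-- `setNbhd G A` is an `X`–`Y` separator whenever `X ⊆ A` and `A ∩ Y = ∅`. -/
theorem isSeparator_setNbhd {G : SimpleGraph V} {A X Y : Set V}
    (hXA : X ⊆ A) (hAY : Disjoint A Y) : IsSeparator G X Y (setNbhd G A) := by
  rw [isSeparator_iff_reach_disjoint]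
  intro y hy hmem
  exact Set.disjoint_left.mp hAY (reachSet_nbhd_subset hXA hmem) hy

/-- the boundary of the reach-closure `X ∪ R(W,X)` is contained in `W` (needs `Disjoint W X`). -/
theorem setNbhd_closure_subset {G : SimpleGraph V} {W X : Set V} (hWX : Disjoint W X) :
    setNbhd G (X ∪ reachSet G W X) ⊆ W := by
  rintro u ⟨hu, z, hz, hadj⟩
  by_contra huW
  apply hu
  right
  rcases hz with hzX | hzR
  · exact reachSet_adj (mem_reachSet_self hzX (fun h => Set.disjoint_left.mp hWX h hzX)) hadj huW
  · exact reachSet_adj hzR hadj huW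

/-! ### submodularity -/

theorem setNbhd_submodular {G : SimpleGraph V} [Finite V] (A B : Set V) :
    (setNbhd G (A ∪ B)).ncard + (setNbhd G (A ∩ B)).ncard ≤
      (setNbhd G A).ncard + (setNbhd G B).ncard := by
  have h1 : setNbhd G (A ∪ B) ∪ setNbhd G (A ∩ B) ⊆ setNbhd G A ∪ setNbhd G B := by
    rintro v (⟨hv, u, hu, hadj⟩ | ⟨hv, u, hu, hadj⟩)
    · rcases hu with hu | hu
      · exact Or.inl ⟨fun h => hv (Or.inl h), u, hu, hadj⟩
      · exact Or.inr ⟨fun h => hv (Or.inr h), u, hu, hadj⟩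
    · by_cases hvA : v ∈ A
      · have hvB : v ∉ B := fun h => hv ⟨hvA, h⟩
        exact Or.inr ⟨hvB, u, hu.2, hadj⟩
      · exact Or.inl ⟨hvA, u, hu.1, hadj⟩
  have h2 : setNbhd G (A ∪ B) ∩ setNbhd G (A ∩ B) ⊆ setNbhd G A ∩ setNbhd G B := by
    rintro v ⟨⟨hv, _⟩, ⟨_, u, hu, hadj⟩⟩
    exact ⟨⟨fun h => hv (Or.inl h), u, hu.1, hadj⟩, ⟨fun h => hv (Or.inr h), u, hu.2, hadj⟩⟩
  calc (setNbhd G (A ∪ B)).ncard + (setNbhd G (A ∩ B)).ncard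
      = (setNbhd G (A ∪ B) ∪ setNbhd G (A ∩ B)).ncard +
        (setNbhd G (A ∪ B) ∩ setNbhd G (A ∩ B)).ncard :=
        (Set.ncard_union_add_ncard_inter _ _ (Set.toFinite _) (Set.toFinite _)).symm
    _ ≤ (setNbhd G A ∪ setNbhd G B).ncard + (setNbhd G A ∩ setNbhd G B).ncard := by
        exact Nat.add_le_add (Set.ncard_le_ncard h1 (Set.toFinite _))
          (Set.ncard_le_ncard h2 (Set.toFinite _))
    _ = (setNbhd G A).ncard + (setNbhd G B).ncard :=
        Set.ncard_union_add_ncard_inter _ _ (Set.toFinite _) (Set.toFinite _)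


/-! ### admissible sets, minimum boundary, the maximum closed minimizer -/

def admiss (X Y : Set V) : Set (Set V) := {A | X ⊆ A ∧ Disjoint A Y}

noncomputable def lam (G : SimpleGraph V) (X Y : Set V) : ℕ :=
  sInf ((fun A => (setNbhd G A).ncard) '' admiss X Y)

theorem admiss_nonempty {X Y : Set V} (hXY : Disjoint X Y) : (admiss X Y).Nonempty :=
  ⟨Yᶜ, Set.subset_compl_iff_disjoint_right.mpr hXY, disjoint_compl_left⟩

theorem lam_le {G : SimpleGraph V} {X Y A : Set V} (hA : A ∈ admiss X Y) :
    lam G X Y ≤ (setNbhd G A).ncard := Nat.sInf_le ⟨A, hA, rfl⟩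

theorem exists_minimizer {G : SimpleGraph V} {X Y : Set V} (hXY : Disjoint X Y) :
    ∃ A ∈ admiss X Y, (setNbhd G A).ncard = lam G X Y := by
  have := Nat.sInf_mem ((admiss_nonempty hXY).image (fun A => (setNbhd G A).ncard))
  obtain ⟨A, hA, h⟩ := this
  exact ⟨A, hA, h⟩

theorem disjoint_setNbhd_left {G : SimpleGraph V} {A X : Set V} (hXA : X ⊆ A) :
    Disjoint (setNbhd G A) X :=
  Set.disjoint_left.mpr (fun u hu hux => hu.1 (hXA hux))

/-- the family of reach-closed minimizers. -/
def Fam (G : SimpleGraph V) (X Y : Set V) : Set (Set V) :=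
  {A | A ∈ admiss X Y ∧ (setNbhd G A).ncard = lam G X Y ∧
    A = X ∪ reachSet G (setNbhd G A) X}

/-- a reach-set is contained in the reach-set of the boundary of its own closure. -/
theorem reach_subset_reach_closure {G : SimpleGraph V} {W X : Set V} (hWX : Disjoint W X) :
    reachSet G W X ⊆ reachSet G (setNbhd G (X ∪ reachSet G W X)) X := by
  rintro z ⟨x, hx, hr⟩
  rw [reachAvoid_iff] at hr
  obtain ⟨p, hp⟩ := hr
  have hsupp : ∀ w ∈ p.support, w ∈ reachSet G W X :=
    support_subset_reachSet (mem_reachSet_self hx.1 hx.2) p hp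
  have hxn : x ∉ setNbhd G (X ∪ reachSet G W X) := fun h => h.1 (Or.inl hx.1)
  refine ⟨x, ⟨hx.1, hxn⟩, reachAvoid_iff.mpr ⟨p, ?_⟩⟩
  intro w hw hwn
  exact hwn.1 (Or.inr (hsupp w hw))

/-- monotonicity of reach-of-own-boundary under enlarging the region. -/
theorem reach_nbhd_mono {G : SimpleGraph V} {A B X : Set V}
    (hXA : X ⊆ A) (hXB : X ⊆ B) (hAB : A ⊆ B) :
    reachSet G (setNbhd G A) X ⊆ reachSet G (setNbhd G B) X := by
  rintro z ⟨x, hx, hr⟩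
  rw [reachAvoid_iff] at hr
  obtain ⟨p, hp⟩ := hr
  have hsupp : ∀ w ∈ p.support, w ∈ A := walk_stays (hXA hx.1) p hp
  refine ⟨x, ⟨hx.1, fun h => h.1 (hXB hx.1)⟩, reachAvoid_iff.mpr ⟨p, ?_⟩⟩
  intro w hw hwn
  exact hwn.1 (hAB (hsupp w hw))

/-- a closed region is covered by reach of any boundary disjoint from it. -/
theorem closed_region_subset_reach {G : SimpleGraph V} {M X W : Set V}
    (hclosed : M = X ∪ reachSet G (setNbhd G M) X) (hXM : X ⊆ M)
    (hWM : Disjoint W M) : M ⊆ X ∪ reachSet G W X := by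
  intro m hm
  rw [hclosed] at hm
  rcases hm with hm | hm
  · exact Or.inl hm
  · obtain ⟨x, hx, hr⟩ := hm
    rw [reachAvoid_iff] at hr
    obtain ⟨p, hp⟩ := hr
    have hsupp : ∀ w ∈ p.support, w ∈ M := by
      intro w hw
      exact reachSet_nbhd_subset hXM
        (support_subset_reachSet (mem_reachSet_self hx.1 hx.2) p hp w hw)
    refine Or.inr ⟨x, ⟨hx.1, fun h => Set.disjoint_left.mp hWM h (hXM hx.1)⟩,
      reachAvoid_iff.mpr ⟨p, fun w hw hwn => Set.disjoint_left.mp hWM hwn (hsupp w hw)⟩⟩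

section Fin
variable [Finite V]

theorem closure_mem_Fam {G : SimpleGraph V} {X Y A : Set V}
    (hA : A ∈ admiss X Y) (hmin : (setNbhd G A).ncard = lam G X Y) :
    (X ∪ reachSet G (setNbhd G A) X) ∈ Fam G X Y := by
  set W := setNbhd G A with hWdef
  set A₁ := X ∪ reachSet G W X with hA₁def
  have hWX : Disjoint W X := disjoint_setNbhd_left hA.1
  have hXY : Disjoint X Y := Set.disjoint_of_subset_left hA.1 hA.2
  have hsep : IsSeparator G X Y W := isSeparator_setNbhd hA.1 hA.2
  have hA₁adm : A₁ ∈ admiss X Y := by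
    refine ⟨Set.subset_union_left, Set.disjoint_left.mpr ?_⟩
    rintro z (hz | hz) hzY
    · exact Set.disjoint_left.mp hXY hz hzY
    · exact (isSeparator_iff_reach_disjoint.mp hsep z hzY) hz
  have hN1 : setNbhd G A₁ ⊆ W := setNbhd_closure_subset hWX
  have hcard : (setNbhd G A₁).ncard = lam G X Y := by
    have h1 : (setNbhd G A₁).ncard ≤ W.ncard :=
      Set.ncard_le_ncard hN1 (Set.toFinite _)
    have h2 := lam_le (G := G) hA₁adm
    have h3 : W.ncard = lam G X Y := hmin
    omega
  refine ⟨hA₁adm, hcard, ?_⟩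
  apply Set.Subset.antisymm
  · apply Set.union_subset Set.subset_union_left
    intro z hz
    exact Or.inr (reach_subset_reach_closure hWX hz)
  · exact Set.union_subset Set.subset_union_left
      (fun z hz => reachSet_nbhd_subset Set.subset_union_left hz)

theorem Fam_union_closed {G : SimpleGraph V} {X Y A B : Set V}
    (hA : A ∈ Fam G X Y) (hB : B ∈ Fam G X Y) : A ∪ B ∈ Fam G X Y := by
  obtain ⟨⟨hXA, hAY⟩, hAcard, hAclosed⟩ := hA
  obtain ⟨⟨hXB, hBY⟩, hBcard, hBclosed⟩ := hB
  have hUadm : A ∪ B ∈ admiss X Y :=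
    ⟨hXA.trans Set.subset_union_left, Set.disjoint_union_left.mpr ⟨hAY, hBY⟩⟩
  have hIadm : A ∩ B ∈ admiss X Y :=
    ⟨Set.subset_inter hXA hXB, Set.disjoint_of_subset_left Set.inter_subset_left hAY⟩
  have hsub := setNbhd_submodular (G := G) A B
  have hU := lam_le (G := G) hUadm
  have hI := lam_le (G := G) hIadm
  have hUcard : (setNbhd G (A ∪ B)).ncard = lam G X Y := by omega
  refine ⟨hUadm, hUcard, ?_⟩
  apply Set.Subset.antisymm
  · rintro z (hz | hz)
    · rw [hAclosed] at hz
      rcases hz with hz | hz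
      · exact Or.inl hz
      · exact Or.inr (reach_nbhd_mono hXA (hXA.trans Set.subset_union_left)
          Set.subset_union_left hz)
    · rw [hBclosed] at hz
      rcases hz with hz | hz
      · exact Or.inl hz
      · exact Or.inr (reach_nbhd_mono hXB (hXA.trans Set.subset_union_left)
          Set.subset_union_right hz)
  · exact Set.union_subset (hXA.trans Set.subset_union_left)
      (fun z hz => reachSet_nbhd_subset (hXA.trans Set.subset_union_left) hz)

theorem exists_max_Fam {G : SimpleGraph V} {X Y : Set V} (hXY : Disjoint X Y) :
    ∃ M ∈ Fam G X Y, ∀ A ∈ Fam G X Y, A ⊆ M := by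
  have hne : (Fam G X Y).Nonempty := by
    obtain ⟨A, hA, hm⟩ := exists_minimizer (G := G) hXY
    exact ⟨_, closure_mem_Fam hA hm⟩
  obtain ⟨M, hM, hmax⟩ := Set.Finite.exists_maximalFor id _ (Set.toFinite _) hne
  refine ⟨M, hM, fun A hA => ?_⟩
  have := hmax (Fam_union_closed hA hM) (Set.subset_union_right)
  simp only [id] at this
  exact Set.subset_union_left.trans this

end Fin


/-! ### important separators (weak form) -/

def ImpSet (G : SimpleGraph V) (ℓ : ℕ) (X Y : Set V) : Set (Set V) :=
  {W | Disjoint W X ∧ IsSeparator G X Y W ∧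
    (∀ W' ⊆ W, IsSeparator G X Y W' → W' = W) ∧
    (∀ W' : Set V, Disjoint W' X → IsSeparator G X Y W' → W'.ncard ≤ W.ncard →
      ¬ reachSet G W X ⊂ reachSet G W' X) ∧ W.ncard ≤ ℓ}

theorem disjoint_XY_of_mem_ImpSet {G : SimpleGraph V} {ℓ : ℕ} {X Y W : Set V}
    (hW : W ∈ ImpSet G ℓ X Y) : Disjoint X Y := by
  obtain ⟨hdisj, hsep, -, -, -⟩ := hW
  rw [Set.disjoint_left]
  intro x hxX hxY
  have hxW : x ∉ W := Set.disjoint_right.mp hdisj hxX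
  exact hsep x ⟨hxX, hxW⟩ x ⟨hxY, hxW⟩ (raRefl hxW)

theorem closure_admiss_of_mem_ImpSet {G : SimpleGraph V} {ℓ : ℕ} {X Y W : Set V}
    (hW : W ∈ ImpSet G ℓ X Y) : (X ∪ reachSet G W X) ∈ admiss X Y := by
  have hXY := disjoint_XY_of_mem_ImpSet hW
  obtain ⟨hdisj, hsep, -, -, -⟩ := hW
  refine ⟨Set.subset_union_left, Set.disjoint_left.mpr ?_⟩
  rintro z (hz | hz) hzY
  · exact Set.disjoint_left.mp hXY hz hzY
  · exact isSeparator_iff_reach_disjoint.mp hsep z hzY hz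

theorem lam_le_ncard_of_mem_ImpSet {G : SimpleGraph V} [Finite V] {ℓ : ℕ} {X Y W : Set V}
    (hW : W ∈ ImpSet G ℓ X Y) : lam G X Y ≤ W.ncard := by
  refine le_trans (lam_le (closure_admiss_of_mem_ImpSet hW)) ?_
  exact Set.ncard_le_ncard (setNbhd_closure_subset (hW.1)) (Set.toFinite _)

theorem ImpSet_subset_singleton_of_sep_empty {G : SimpleGraph V} {ℓ : ℕ} {X Y : Set V}
    (hsep : IsSeparator G X Y ∅) : ImpSet G ℓ X Y ⊆ {∅} := by
  intro W hW
  obtain ⟨-, -, hmin, -, -⟩ := hW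
  have h := hmin ∅ (Set.empty_subset W) hsep
  simp [← h]

section Push
variable [Finite V]

/-- Pushing lemma: the reach closure of any important separator contains `M`. -/
theorem pushing {G : SimpleGraph V} {ℓ : ℕ} {X Y M W : Set V}
    (hM : M ∈ Fam G X Y) (hW : W ∈ ImpSet G ℓ X Y) :
    M ⊆ X ∪ reachSet G W X := by
  obtain ⟨hWX, hsep, hmin, himp, hcard⟩ := hW
  by_contra hnot
  rw [Set.not_subset] at hnot
  obtain ⟨z, hzM, hzA⟩ := hnot
  set AW := X ∪ reachSet G W X with hAWdef
  have hAWadm : AW ∈ admiss X Y := closure_admiss_of_mem_ImpSet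
    ⟨hWX, hsep, hmin, himp, hcard⟩
  obtain ⟨hMadm, hMcard, hMclosed⟩ := hM
  set A' := AW ∪ M with hA'def
  set W' := setNbhd G A' with hW'def
  have hA'adm : A' ∈ admiss X Y :=
    ⟨Set.subset_union_left.trans (le_of_eq rfl) |>.trans (Set.Subset.refl _) |>.trans
      (Set.subset_union_left), Set.disjoint_union_left.mpr ⟨hAWadm.2, hMadm.2⟩⟩
  have hIadm : AW ∩ M ∈ admiss X Y :=
    ⟨Set.subset_inter Set.subset_union_left hMadm.1,
      Set.disjoint_of_subset_left Set.inter_subset_left hAWadm.2⟩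
  -- size of W'
  have hsub := setNbhd_submodular (G := G) AW M
  rw [← hA'def, ← hW'def] at hsub
  have hI := lam_le (G := G) hIadm
  have hNAW : (setNbhd G AW).ncard ≤ W.ncard :=
    Set.ncard_le_ncard (setNbhd_closure_subset hWX) (Set.toFinite _)
  have hMc : (setNbhd G M).ncard = lam G X Y := hMcard
  have hW'card : W'.ncard ≤ W.ncard := by omega
  -- W' is a separator disjoint from X
  have hW'sep : IsSeparator G X Y W' := isSeparator_setNbhd hA'adm.1 hA'adm.2
  have hW'X : Disjoint W' X := disjoint_setNbhd_left hA'adm.1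
  -- reach of W contained in reach of W'
  have hRsub : reachSet G W X ⊆ reachSet G W' X := by
    rintro y ⟨x, hx, hr⟩
    rw [reachAvoid_iff] at hr
    obtain ⟨p, hp⟩ := hr
    have hsupp : ∀ w ∈ p.support, w ∈ reachSet G W X :=
      support_subset_reachSet (mem_reachSet_self hx.1 hx.2) p hp
    refine ⟨x, ⟨hx.1, fun h => h.1 (Or.inl (Or.inl hx.1))⟩, reachAvoid_iff.mpr ⟨p, ?_⟩⟩
    intro w hw hwn
    exact hwn.1 (Or.inl (Or.inr (hsupp w hw)))
  -- z witnesses strictness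
  have hzreach : z ∈ reachSet G W' X := by
    have hWM : Disjoint W' M := Set.disjoint_left.mpr
      (fun u hu huM => hu.1 (Or.inr huM))
    have := closed_region_subset_reach hMclosed hMadm.1 hWM hzM
    rcases this with hz | hz
    · exact absurd (Or.inl hz) hzA
    · exact hz
  have hznot : z ∉ reachSet G W X := fun h => hzA (Or.inr h)
  exact himp W' hW'X hW'sep hW'card ⟨hRsub, fun hss => hznot (hss hzreach)⟩

end Push


section Branch2
variable [Finite V]

/-- In branch 2, an important separator avoiding `v` is important for the enlarged source. -/
theorem branch2_mem {G : SimpleGraph V} {ℓ : ℕ} {X Y M : Set V} {v : V}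
    (hM : M ∈ Fam G X Y) (hv : v ∈ setNbhd G M)
    {W : Set V} (hW : W ∈ ImpSet G ℓ X Y) (hvW : v ∉ W) :
    W ∈ ImpSet G ℓ (insert v M) Y := by
  have hpush := pushing hM hW
  obtain ⟨hMadm, hMcard, hMclosed⟩ := hM
  obtain ⟨hWX, hsep, hmin, himp, hcard⟩ := hW
  have hXM : X ⊆ M := hMadm.1
  -- W is disjoint from M
  have hWM : Disjoint W M := Set.disjoint_left.mpr (fun u huW huM => by
    rcases hpush huM with h | h
    · exact Set.disjoint_left.mp hWX huW h
    · exact reachSet_notMem_W h huW)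
  have hWX' : Disjoint W (insert v M) := by
    rw [Set.disjoint_right]
    rintro u (rfl | huM)
    · exact hvW
    · exact Set.disjoint_right.mp hWM huM
  -- v is in the reach set of W
  have hvR : v ∈ reachSet G W X := by
    obtain ⟨hvM, m, hm, hadj⟩ := hv
    rcases hpush hm with h | h
    · exact reachSet_adj (mem_reachSet_self h (Set.disjoint_right.mp hWX h)) hadj hvW
    · exact reachSet_adj h hadj hvW
  have hX'sub : insert v M ⊆ X ∪ reachSet G W X := by
    intro u hu
    rcases Set.mem_insert_iff.mp hu with rfl | hu
    · exact Or.inr hvR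
    · exact hpush hu
  have hXX' : X ⊆ insert v M := hXM.trans (Set.subset_insert _ _)
  -- reach sets agree
  have hreq : reachSet G W (insert v M) = reachSet G W X := by
    apply Set.Subset.antisymm
    · rintro y ⟨x, hx, hr⟩
      rcases hX'sub hx.1 with h | h
      · exact ⟨x, ⟨h, hx.2⟩, hr⟩
      · exact reachSet_trans h hr
    · exact reachSet_mono_X hXX'
  -- separator
  have hsep' : IsSeparator G (insert v M) Y W := by
    rw [isSeparator_iff_reach_disjoint, hreq]
    exact isSeparator_iff_reach_disjoint.mp hsep
  refine ⟨hWX', hsep', ?_, ?_, hcard⟩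
  · intro W' hW'sub hW'sep
    exact hmin W' hW'sub (isSeparator_anti_X hXX' hW'sep)
  · intro W'' hW''X' hW''sep hW''card hss
    -- W'' also has equal reach for X and insert v M
    have hW''M : Disjoint W'' M :=
      Set.disjoint_of_subset_right (Set.subset_insert _ _) hW''X'
    have hMsub'' : M ⊆ X ∪ reachSet G W'' X :=
      closed_region_subset_reach hMclosed hXM hW''M
    have hvW'' : v ∉ W'' := Set.disjoint_right.mp hW''X' (Set.mem_insert _ _)
    have hvR'' : v ∈ reachSet G W'' X := by
      obtain ⟨hvM, m, hm, hadj⟩ := hv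
      rcases hMsub'' hm with h | h
      · exact reachSet_adj (mem_reachSet_self h (Set.disjoint_right.mp
          (Set.disjoint_of_subset_right hXX' hW''X') h)) hadj hvW''
      · exact reachSet_adj h hadj hvW''
    have hreq'' : reachSet G W'' (insert v M) = reachSet G W'' X := by
      apply Set.Subset.antisymm
      · rintro y ⟨x, hx, hr⟩
        rcases Set.mem_insert_iff.mp hx.1 with rfl | hxM
        · exact reachSet_trans hvR'' hr
        · rcases hMsub'' hxM with h | h
          · exact ⟨x, ⟨h, hx.2⟩, hr⟩
          · exact reachSet_trans h hr
      · exact reachSet_mono_X hXX'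
    rw [hreq, hreq''] at hss
    exact himp W'' (Set.disjoint_of_subset_right hXX' hW''X')
      (isSeparator_anti_X hXX' hW''sep) hW''card hss

/-- In branch 2 the minimum cut strictly increases. -/
theorem lam_insert_gt {G : SimpleGraph V} {X Y M : Set V} {v : V}
    (hM : M ∈ Fam G X Y) (hMmax : ∀ A ∈ Fam G X Y, A ⊆ M)
    (hv : v ∈ setNbhd G M) (hvY : v ∉ Y) :
    lam G X Y + 1 ≤ lam G (insert v M) Y := by
  obtain ⟨hMadm, hMcard, hMclosed⟩ := hM
  have hXY : Disjoint X Y := Set.disjoint_of_subset_left hMadm.1 hMadm.2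
  have hX'Y : Disjoint (insert v M) Y := by
    rw [Set.disjoint_left]
    rintro u (rfl | huM)
    · exact hvY
    · exact Set.disjoint_left.mp hMadm.2 huM
  obtain ⟨A', hA'adm, hA'card⟩ := exists_minimizer (G := G) hX'Y
  rw [← hA'card]
  have hMA' : M ⊆ A' := (Set.subset_insert _ _).trans hA'adm.1
  have hvA' : v ∈ A' := hA'adm.1 (Set.mem_insert _ _)
  have hA'admX : A' ∈ admiss X Y := ⟨hMadm.1.trans hMA', hA'adm.2⟩
  have hge : lam G X Y ≤ (setNbhd G A').ncard := lam_le hA'admX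
  rcases lt_or_eq_of_le hge with h | h
  · omega
  -- equality case: the closure of A' is a member of Fam containing v, contradiction
  exfalso
  have hcl : (X ∪ reachSet G (setNbhd G A') X) ∈ Fam G X Y :=
    closure_mem_Fam hA'admX h.symm
  have hsub := hMmax _ hcl
  have hNA'A' : Disjoint (setNbhd G A') A' :=
    Set.disjoint_left.mpr (fun u hu => hu.1)
  have hNA'M : Disjoint (setNbhd G A') M := Set.disjoint_of_subset_right hMA' hNA'A'
  -- v is in the closure of A'
  have hvcl : v ∈ X ∪ reachSet G (setNbhd G A') X := by
    obtain ⟨hvM, m, hm, hadj⟩ := hv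
    have hmcl := closed_region_subset_reach hMclosed hMadm.1 hNA'M hm
    have hvnb : v ∉ setNbhd G A' := fun h => h.1 hvA'
    rcases hmcl with h' | h'
    · exact Or.inr (reachSet_adj (mem_reachSet_self h'
        (Set.disjoint_right.mp (disjoint_setNbhd_left (hMadm.1.trans hMA')) h')) hadj hvnb)
    · exact Or.inr (reachSet_adj h' hadj hvnb)
  exact hv.1 (hsub hvcl)

end Branch2


/-! ### branch 1: vertex deletion -/

def delV (G : SimpleGraph V) (v : V) : SimpleGraph V where
  Adj a b := G.Adj a b ∧ a ≠ v ∧ b ≠ v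
  symm := ⟨fun a b ⟨h, h1, h2⟩ => ⟨h.symm, h2, h1⟩⟩
  loopless := ⟨fun a h => G.loopless.irrefl a h.1⟩

theorem delV_reachAvoid_of {G : SimpleGraph V} {v : V} {W : Set V} {x y : V}
    (h : ReachAvoid G (insert v W) x y) : ReachAvoid (delV G v) W x y := by
  rw [reachAvoid_iff] at h
  obtain ⟨p, hp⟩ := h
  induction p with
  | nil => exact raRefl (fun hc => hp _ (by simp) (Set.mem_insert_iff.mpr (Or.inr hc)))
  | @cons a b c hab q ih =>
    have ha : a ∉ insert v W := hp a (by simp)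
    have hb : b ∉ insert v W := hp b (by simp)
    have h1 : ReachAvoid (delV G v) W a b :=
      raAdj ⟨hab, fun hc => ha (hc ▸ Set.mem_insert _ _),
        fun hc => hb (hc ▸ Set.mem_insert _ _)⟩
        (fun hc => ha (Set.mem_insert_iff.mpr (Or.inr hc)))
        (fun hc => hb (Set.mem_insert_iff.mpr (Or.inr hc)))
    exact raTrans h1 (ih (fun z hz => hp z (by simp [hz])))

theorem reachAvoid_of_delV_aux {G : SimpleGraph V} {v : V} {W : Set V} :
    ∀ {x y : V} (p : (delV G v).Walk x y), (∀ z ∈ p.support, z ∉ W) → x ≠ v →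
      ReachAvoid G (insert v W) x y := by
  intro x y p
  induction p with
  | nil =>
    intro hp hx
    apply raRefl
    intro hc
    rcases Set.mem_insert_iff.mp hc with rfl | hWW
    · exact hx rfl
    · exact hp _ (by simp) hWW
  | @cons a b c hab q ih =>
    intro hp hx
    have hb : b ≠ v := hab.2.2
    have h1 : ReachAvoid G (insert v W) a b :=
      raAdj hab.1 (by simp [hx, hp a (by simp)]) (by simp [hb, hp b (by simp)])
    exact raTrans h1 (ih (fun z hz => hp z (by simp [hz])) hb)

theorem delV_walk_support_ne {G : SimpleGraph V} {v : V} :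
    ∀ {x y : V} (p : (delV G v).Walk x y), x ≠ v → ∀ z ∈ p.support, z ≠ v := by
  intro x y p
  induction p with
  | nil => intro hx z hz; simp at hz; subst hz; exact hx
  | @cons a b c hab q ih =>
    intro hx z hz
    rcases List.mem_cons.mp (by simpa using hz) with rfl | hz'
    · exact hx
    · exact ih hab.2.2 z hz'

theorem reachAvoid_of_delV {G : SimpleGraph V} {v : V} {W : Set V} {x y : V}
    (hx : x ≠ v) (h : ReachAvoid (delV G v) W x y) : ReachAvoid G (insert v W) x y := by
  rw [reachAvoid_iff] at h
  obtain ⟨p, hp⟩ := h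
  exact reachAvoid_of_delV_aux p hp hx

theorem delV_reach_eq {G : SimpleGraph V} {v : V} {W X : Set V}
    (hvW : v ∈ W) (hvX : v ∉ X) :
    reachSet (delV G v) (W \ {v}) X = reachSet G W X := by
  have hins : insert v (W \ {v}) = W := by
    rw [Set.insert_diff_singleton]
    exact Set.insert_eq_self.mpr hvW
  apply Set.Subset.antisymm
  · rintro y ⟨x, hx, hr⟩
    have hxv : x ≠ v := fun hc => hvX (hc ▸ hx.1)
    have := reachAvoid_of_delV hxv hr
    rw [hins] at this
    exact ⟨x, ⟨hx.1, raLeft this⟩, this⟩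
  · rintro y ⟨x, hx, hr⟩
    have hr' : ReachAvoid G (insert v (W \ {v})) x y := by rw [hins]; exact hr
    exact ⟨x, ⟨hx.1, fun hc => hx.2 hc.1⟩, delV_reachAvoid_of hr'⟩

theorem delV_sep_of {G : SimpleGraph V} {v : V} {X Y W : Set V}
    (hsep : IsSeparator G X Y W) (hvW : v ∈ W) (hvX : v ∉ X) :
    IsSeparator (delV G v) X Y (W \ {v}) := by
  intro x hx y hy hr
  have hxv : x ≠ v := fun hc => hvX (hc ▸ hx.1)
  have hr' := reachAvoid_of_delV hxv hr
  have hins : insert v (W \ {v}) = W := by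
    rw [Set.insert_diff_singleton]; exact Set.insert_eq_self.mpr hvW
  rw [hins] at hr'
  exact hsep x ⟨hx.1, raLeft hr'⟩ y ⟨hy.1, raRight hr'⟩ hr'

theorem sep_of_delV {G : SimpleGraph V} {v : V} {X Y W : Set V}
    (hsep : IsSeparator (delV G v) X Y W) (hvX : v ∉ X) :
    IsSeparator G X Y (insert v W) := by
  intro x hx y hy hr
  have hr' := delV_reachAvoid_of hr
  exact hsep x ⟨hx.1, fun hc => hx.2 (Set.mem_insert_iff.mpr (Or.inr hc))⟩
    y ⟨hy.1, fun hc => hy.2 (Set.mem_insert_iff.mpr (Or.inr hc))⟩ hr'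

/-- dropping `v` from the avoided set changes nothing in `delV G v`. -/
theorem delV_reach_drop {G : SimpleGraph V} {v : V} {W X : Set V} (hvX : v ∉ X) :
    reachSet (delV G v) (W \ {v}) X = reachSet (delV G v) W X := by
  apply Set.Subset.antisymm
  · rintro y ⟨x, hx, hr⟩
    have hxv : x ≠ v := fun hc => hvX (hc ▸ hx.1)
    rw [reachAvoid_iff] at hr
    obtain ⟨p, hp⟩ := hr
    have hsup : ∀ z ∈ p.support, z ≠ v := delV_walk_support_ne p hxv
    refine ⟨x, ⟨hx.1, fun hc => hx.2 ⟨hc, hxv⟩⟩, reachAvoid_iff.mpr ⟨p, ?_⟩⟩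
    intro z hz hzW
    exact hp z hz ⟨hzW, hsup z hz⟩
  · exact reachSet_mono_W Set.diff_subset

theorem delV_sep_drop {G : SimpleGraph V} {v : V} {X Y W : Set V} (hvX : v ∉ X)
    (hsep : IsSeparator (delV G v) X Y W) : IsSeparator (delV G v) X Y (W \ {v}) := by
  rw [isSeparator_iff_reach_disjoint] at hsep ⊢
  rw [delV_reach_drop hvX]
  exact hsep

theorem lam_delV_ge {G : SimpleGraph V} [Finite V] {X Y : Set V} {v : V}
    (hXY : Disjoint X Y) (hvX : v ∉ X) :
    lam G X Y ≤ lam (delV G v) X Y + 1 := by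
  obtain ⟨A', hA'adm, hA'card⟩ := exists_minimizer (G := delV G v) hXY
  have hA''adm : A' \ {v} ∈ admiss X Y :=
    ⟨fun x hx => ⟨hA'adm.1 hx, fun hc => hvX ((Set.mem_singleton_iff.mp hc) ▸ hx)⟩,
      Set.disjoint_of_subset_left Set.diff_subset hA'adm.2⟩
  have hsub : setNbhd G (A' \ {v}) ⊆ insert v (setNbhd (delV G v) A') := by
    rintro u ⟨hu, a, ha, hadj⟩
    by_cases huv : u = v
    · exact huv ▸ Set.mem_insert _ _
    refine Set.mem_insert_iff.mpr (Or.inr ⟨?_, a, ha.1, hadj, ha.2, huv⟩)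
    intro huA'
    exact hu ⟨huA', huv⟩
  calc lam G X Y ≤ (setNbhd G (A' \ {v})).ncard := lam_le hA''adm
    _ ≤ (insert v (setNbhd (delV G v) A')).ncard :=
        Set.ncard_le_ncard hsub (Set.toFinite _)
    _ ≤ (setNbhd (delV G v) A').ncard + 1 := Set.ncard_insert_le _ _
    _ = lam (delV G v) X Y + 1 := by rw [hA'card]

/-- branch 1 membership: removing `v` from an important separator containing it. -/
theorem branch1_mem {G : SimpleGraph V} [Finite V] {ℓ : ℕ} {X Y W : Set V} {v : V}
    (hW : W ∈ ImpSet G ℓ X Y) (hvW : v ∈ W) (hl : 1 ≤ ℓ) :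
    W \ {v} ∈ ImpSet (delV G v) (ℓ - 1) X Y := by
  obtain ⟨hWX, hsep, hmin, himp, hcard⟩ := hW
  have hvX : v ∉ X := Set.disjoint_left.mp hWX hvW
  have hins : insert v (W \ {v}) = W := by
    rw [Set.insert_diff_singleton]; exact Set.insert_eq_self.mpr hvW
  have hdiffcard : (W \ {v}).ncard + 1 = W.ncard :=
    Set.ncard_diff_singleton_add_one hvW (Set.toFinite _)
  refine ⟨Set.disjoint_of_subset_left Set.diff_subset hWX,
    delV_sep_of hsep hvW hvX, ?_, ?_, by omega⟩
  · intro W₁ hW₁sub hW₁sep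
    have h1 : insert v W₁ ⊆ W := by
      rw [← hins]; exact Set.insert_subset_insert hW₁sub
    have h2 := hmin _ h1 (sep_of_delV hW₁sep hvX)
    have hvW₁ : v ∉ W₁ := fun hc => (hW₁sub hc).2 rfl
    rw [← h2, Set.insert_diff_self_of_notMem hvW₁]
  · intro W₂ hW₂X hW₂sep hW₂card hss
    -- replace W₂ by W₂ \ {v}
    set W₂' := W₂ \ {v} with hW₂'def
    have hW₂'sep : IsSeparator (delV G v) X Y W₂' := delV_sep_drop hvX hW₂sep
    have hW₂'X : Disjoint W₂' X := Set.disjoint_of_subset_left Set.diff_subset hW₂X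
    have hvW₂' : v ∉ W₂' := fun hc => hc.2 rfl
    have hW₃sep : IsSeparator G X Y (insert v W₂') := sep_of_delV hW₂'sep hvX
    have hW₃X : Disjoint (insert v W₂') X := by
      rw [Set.disjoint_left]
      rintro u (rfl | hu)
      · exact hvX
      · exact Set.disjoint_left.mp hW₂'X hu
    have hW₃card : (insert v W₂').ncard ≤ W.ncard := by
      have h1 : W₂'.ncard ≤ W₂.ncard := Set.ncard_le_ncard Set.diff_subset (Set.toFinite _)
      have h2 := Set.ncard_insert_le v W₂'
      omega
    apply himp (insert v W₂') hW₃X hW₃sep hW₃card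
    have e1 : reachSet G (insert v W₂') X = reachSet (delV G v) W₂' X := by
      rw [← delV_reach_eq (W := insert v W₂') (Set.mem_insert _ _) hvX]
      congr 1
      simp [hvW₂']
    have e2 : reachSet G W X = reachSet (delV G v) (W \ {v}) X :=
      (delV_reach_eq hvW hvX).symm
    rw [e1, e2]
    rw [delV_reach_drop hvX] at hss ⊢
    exact ssubset_of_ssubset_of_subset hss (reachSet_mono_W Set.diff_subset)


/-! ### the counting theorem -/

section Count
variable [Finite V]

theorem count_main : ∀ (μ : ℕ) (G : SimpleGraph V) (X Y : Set V) (ℓ : ℕ),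
    2 * ℓ ≤ μ + lam G X Y → (ImpSet G ℓ X Y).ncard ≤ 2 ^ μ := by
  intro μ
  induction μ with
  | zero =>
    intro G X Y ℓ hμ
    rcases Set.eq_empty_or_nonempty (ImpSet G ℓ X Y) with he | ⟨W₀, hW₀⟩
    · simp [he]
    have hXY := disjoint_XY_of_mem_ImpSet hW₀
    have h1 := lam_le_ncard_of_mem_ImpSet hW₀
    have h2 := hW₀.2.2.2.2
    -- then ℓ = 0 and lam = 0
    have hlam0 : lam G X Y = 0 := by omega
    obtain ⟨A, hAadm, hAcard⟩ := exists_minimizer (G := G) hXY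
    have hNA : setNbhd G A = ∅ := by
      rw [← Set.ncard_eq_zero (Set.toFinite _)]; omega
    have hsep0 : IsSeparator G X Y ∅ := hNA ▸ isSeparator_setNbhd hAadm.1 hAadm.2
    calc (ImpSet G ℓ X Y).ncard ≤ ({∅} : Set (Set V)).ncard :=
          Set.ncard_le_ncard (ImpSet_subset_singleton_of_sep_empty hsep0) (Set.toFinite _)
      _ ≤ 2 ^ 0 := by simp
  | succ μ ih =>
    intro G X Y ℓ hμ
    rcases Set.eq_empty_or_nonempty (ImpSet G ℓ X Y) with he | ⟨W₀, hW₀⟩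
    · simp [he]
    have hXY := disjoint_XY_of_mem_ImpSet hW₀
    have h1 := lam_le_ncard_of_mem_ImpSet hW₀
    have h2 := hW₀.2.2.2.2
    rcases Nat.eq_zero_or_pos (lam G X Y) with hlam0 | hlampos
    · obtain ⟨A, hAadm, hAcard⟩ := exists_minimizer (G := G) hXY
      have hNA : setNbhd G A = ∅ := by
        rw [← Set.ncard_eq_zero (Set.toFinite _)]; omega
      have hsep0 : IsSeparator G X Y ∅ := hNA ▸ isSeparator_setNbhd hAadm.1 hAadm.2
      calc (ImpSet G ℓ X Y).ncard ≤ ({∅} : Set (Set V)).ncard :=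
            Set.ncard_le_ncard (ImpSet_subset_singleton_of_sep_empty hsep0) (Set.toFinite _)
        _ ≤ 2 ^ (μ + 1) := by simpa using Nat.one_le_two_pow
    -- main case: 1 ≤ lam ≤ ℓ
    obtain ⟨M, hM, hMmax⟩ := exists_max_Fam (G := G) hXY
    have hMcard : (setNbhd G M).ncard = lam G X Y := hM.2.1
    have hNne : (setNbhd G M).Nonempty := by
      apply Set.nonempty_of_ncard_ne_zero; omega
    obtain ⟨v, hv⟩ := hNne
    have hvX : v ∉ X := fun hc => hv.1 (hM.1.1 hc)
    have hℓpos : 1 ≤ ℓ := by omega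
    -- split
    have hsplit : ImpSet G ℓ X Y ⊆
        {W ∈ ImpSet G ℓ X Y | v ∈ W} ∪ {W ∈ ImpSet G ℓ X Y | v ∉ W} := by
      intro W hW
      by_cases hvW : v ∈ W
      · exact Or.inl ⟨hW, hvW⟩
      · exact Or.inr ⟨hW, hvW⟩
    -- branch 1 bound
    have hb1 : ({W ∈ ImpSet G ℓ X Y | v ∈ W}).ncard ≤ 2 ^ μ := by
      have hmap : ∀ W ∈ {W ∈ ImpSet G ℓ X Y | v ∈ W},
          W \ {v} ∈ ImpSet (delV G v) (ℓ - 1) X Y :=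
        fun W hW => branch1_mem hW.1 hW.2 hℓpos
      have hinj : Set.InjOn (· \ ({v} : Set V)) {W ∈ ImpSet G ℓ X Y | v ∈ W} := by
        intro W hW W' hW' h
        have : insert v (W \ {v}) = insert v (W' \ {v}) := by simp only at h; rw [h]
        rwa [Set.insert_diff_singleton, Set.insert_diff_singleton,
          Set.insert_eq_self.mpr hW.2, Set.insert_eq_self.mpr hW'.2] at this
      have hle := Set.ncard_le_ncard_of_injOn _ hmap hinj (Set.toFinite _)
      refine hle.trans (ih (delV G v) X Y (ℓ - 1) ?_)
      have hdel := lam_delV_ge (G := G) (v := v) hXY hvX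
      omega
    -- branch 2 bound
    have hb2 : ({W ∈ ImpSet G ℓ X Y | v ∉ W}).ncard ≤ 2 ^ μ := by
      have hmap : ∀ W ∈ {W ∈ ImpSet G ℓ X Y | v ∉ W},
          W ∈ ImpSet G ℓ (insert v M) Y :=
        fun W hW => branch2_mem hM hv hW.1 hW.2
      by_cases hvY : v ∈ Y
      · have hempty : {W ∈ ImpSet G ℓ X Y | v ∉ W} = ∅ := by
          rw [Set.eq_empty_iff_forall_notMem]
          intro W hW
          have hXY' := disjoint_XY_of_mem_ImpSet (hmap W hW)
          exact Set.disjoint_left.mp hXY' (Set.mem_insert _ _) hvY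
        simp [hempty]
      · have hle := Set.ncard_le_ncard (fun W hW => hmap W hW) (Set.toFinite _)
        refine hle.trans (ih G (insert v M) Y ℓ ?_)
        have hgt := lam_insert_gt hM hMmax hv hvY
        omega
    calc (ImpSet G ℓ X Y).ncard
        ≤ ({W ∈ ImpSet G ℓ X Y | v ∈ W} ∪ {W ∈ ImpSet G ℓ X Y | v ∉ W}).ncard :=
          Set.ncard_le_ncard hsplit (Set.toFinite _)
      _ ≤ ({W ∈ ImpSet G ℓ X Y | v ∈ W}).ncard + ({W ∈ ImpSet G ℓ X Y | v ∉ W}).ncard :=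
          Set.ncard_union_le _ _
      _ ≤ 2 ^ μ + 2 ^ μ := Nat.add_le_add hb1 hb2
      _ = 2 ^ (μ + 1) := by ring

theorem ImpSet_card_le (G : SimpleGraph V) (ℓ : ℕ) (X Y : Set V) :
    (ImpSet G ℓ X Y).ncard ≤ 4 ^ ℓ := by
  have := count_main (2 * ℓ) G X Y ℓ (by omega)
  calc (ImpSet G ℓ X Y).ncard ≤ 2 ^ (2 * ℓ) := this
    _ = 4 ^ ℓ := by rw [pow_mul]; norm_num

end Count


/-! ### counting unions -/

theorem ncard_biUnion_le {ι : Type*} [Finite V] (s : Finset ι) (f : ι → Set V) :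
    (⋃ i ∈ s, f i).ncard ≤ ∑ i ∈ s, (f i).ncard := by
  classical
  induction s using Finset.induction_on with
  | empty => simp
  | @insert a s ha ih =>
    rw [Finset.set_biUnion_insert, Finset.sum_insert ha]
    exact (Set.ncard_union_le _ _).trans (Nat.add_le_add_left ih _)

/-! ### walks inside a region and induced connectivity -/

theorem induce_reachable_of_walk {G : SimpleGraph V} {D : Set V} :
    ∀ {x y : V} (p : G.Walk x y), (∀ z ∈ p.support, z ∈ D) →
      ∀ (hx : x ∈ D) (hy : y ∈ D), (G.induce D).Reachable ⟨x, hx⟩ ⟨y, hy⟩ := by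
  intro x y p
  induction p with
  | nil => intro _ hx hy; rfl
  | @cons a b c hab q ih =>
    intro hp hx hy
    have hb : b ∈ D := hp b (by simp)
    have h1 : (G.induce D).Adj ⟨a, hx⟩ ⟨b, hb⟩ := by simpa using hab
    exact h1.reachable.trans (ih (fun z hz => hp z (by simp [hz])) hb hy)

theorem conn_reachAvoid {G : SimpleGraph V} {C W' : Set V}
    (hconn : (G.induce C).Connected) (hd : Disjoint W' C) {x y : V}
    (hx : x ∈ C) (hy : y ∈ C) : ReachAvoid G W' x y := by
  obtain ⟨q⟩ := hconn.preconnected ⟨x, hx⟩ ⟨y, hy⟩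
  rw [reachAvoid_iff]
  refine ⟨q.map (SimpleGraph.Embedding.induce C).toHom, ?_⟩
  intro z hz
  erw [SimpleGraph.Walk.support_map] at hz
  obtain ⟨a, _, rfl⟩ := List.mem_map.mp hz
  exact fun hc => Set.disjoint_left.mp hd hc a.2

/-- generalised stay lemma. -/
theorem walk_stays_general {G : SimpleGraph V} {A Ws : Set V}
    (hstep : ∀ a ∈ A, ∀ b, G.Adj a b → b ∉ Ws → b ∈ A) :
    ∀ {x y : V} (p : G.Walk x y), x ∈ A → (∀ z ∈ p.support, z ∉ Ws) →
      ∀ z ∈ p.support, z ∈ A := by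
  intro x y p
  induction p with
  | nil => intro hx _ z hz; simp at hz; subst hz; exact hx
  | @cons a b c hab q ih =>
    intro hx hp z hz
    have hb : b ∈ A := hstep a hx b hab (hp b (by simp))
    rcases List.mem_cons.mp (by simpa using hz) with rfl | hz'
    · exact hx
    · exact ih hb (fun w hw => hp w (by simp [hw])) z hz'



theorem disjoint_setNbhd_self {G : SimpleGraph V} {C : Set V} :
    Disjoint (setNbhd G C) C := Set.disjoint_left.mpr (fun u hu => hu.1)

/-- reach sets from a single vertex of a connected region agree with reach from the region. -/
theorem reach_singleton_eq {G : SimpleGraph V} {C W' : Set V} {v : V}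
    (hconn : (G.induce C).Connected) (hd : Disjoint W' C) (hv : v ∈ C) :
    reachSet G W' {v} = reachSet G W' C := by
  apply Set.Subset.antisymm
  · exact reachSet_mono_X (by simp [hv])
  · rintro y ⟨x, hx, hr⟩
    have hvx : ReachAvoid G W' v x := conn_reachAvoid hconn hd hv hx.1
    exact ⟨v, ⟨rfl, Set.disjoint_right.mp hd hv⟩, raTrans hvx hr⟩

theorem sep_C_of_sep_v {G : SimpleGraph V} {C S W' : Set V} {v : V}
    (hconn : (G.induce C).Connected) (hd : Disjoint W' C) (hv : v ∈ C)
    (hsep : IsSeparator G {v} S W') : IsSeparator G C S W' := by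
  intro x hx y hy hr
  have hvx : ReachAvoid G W' v x := conn_reachAvoid hconn hd hv hx.1
  exact hsep v ⟨rfl, Set.disjoint_left.mp hd.symm hv⟩ y hy (raTrans hvx hr)

/-- the boundary of a chip is a (weakly) important `{v}`–`S` separator for any `v ∈ C`. -/
theorem chip_mem_ImpSet {G : SimpleGraph V} [Finite V] {k : ℕ} {S C : Set V} {v : V}
    (hC : IsChip G k S C) (hv : v ∈ C) :
    setNbhd G C ∈ ImpSet G (3 * k) {v} S := by
  obtain ⟨hconn, hcard, hsep, hmin, himp⟩ := hC
  have hdWC : Disjoint (setNbhd G C) C := disjoint_setNbhd_self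
  have hvW : v ∉ setNbhd G C := Set.disjoint_left.mp hdWC.symm hv
  refine ⟨by simpa using hvW, isSeparator_anti_X (by simp [hv]) hsep, ?_, ?_, hcard⟩
  · intro W' hW'sub hW'sep
    exact hmin W' hW'sub (sep_C_of_sep_v hconn
      (Set.disjoint_of_subset_left hW'sub hdWC) hv hW'sep)
  · intro W'' hW''v hW''sep hW''card hss
    have hCreach : C ⊆ reachSet G (setNbhd G C) {v} := by
      rw [reach_singleton_eq hconn hdWC hv]
      exact fun x hx => mem_reachSet_self hx (Set.disjoint_left.mp hdWC.symm hx)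
    have hCR'' : C ⊆ reachSet G W'' {v} := fun x hx => hss.1 (hCreach hx)
    have hdW''C : Disjoint W'' C := Set.disjoint_right.mpr
      (fun x hx => reachSet_notMem_W (hCR'' hx))
    have hW''sepC : IsSeparator G C S W'' := sep_C_of_sep_v hconn hdW''C hv hW''sep
    apply himp W'' hW''sepC hW''card
    rw [← reach_singleton_eq hconn hdWC hv, ← reach_singleton_eq hconn hdW''C hv]
    exact hss

/-- a maximal chip equals the reach set from any of its vertices. -/
theorem maximal_chip_eq_reach {G : SimpleGraph V} [Finite V] {k : ℕ} {S C : Set V} {v : V}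
    (hC : C ∈ maximalChips G k S) (hv : v ∈ C) :
    C = reachSet G (setNbhd G C) {v} := by
  obtain ⟨hchip, hmaxl⟩ := hC
  obtain ⟨hconn, hcard, hsep, hmin, himp⟩ := hchip
  set W := setNbhd G C with hWdef
  have hdWC : Disjoint W C := disjoint_setNbhd_self
  have hvW : v ∉ W := Set.disjoint_left.mp hdWC.symm hv
  set D := reachSet G W {v} with hDdef
  have hCD : C ⊆ D := by
    rw [hDdef, reach_singleton_eq hconn hdWC hv]
    exact fun x hx => mem_reachSet_self hx (Set.disjoint_left.mp hdWC.symm hx)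
  have hvD : v ∈ D := hCD hv
  have hDW : Disjoint W D := Set.disjoint_left.mpr
    (fun u huW huD => reachSet_notMem_W huD huW)
  -- D has no S vertices outside W
  have hDS : ∀ y ∈ D, y ∈ S → False := by
    intro y hyD hyS
    obtain ⟨v', hv', hr⟩ := hyD
    have hv'v : v' = v := hv'.1
    subst hv'v
    exact hsep v' ⟨hv, hvW⟩ y ⟨hyS, raRight hr⟩ hr
  -- D is connected
  have hconnD : (G.induce D).Connected := by
    rw [SimpleGraph.connected_iff]
    constructor
    · rintro ⟨a, ha⟩ ⟨b, hb⟩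
      have haR : a ∈ reachSet G W {v} := ha
      obtain ⟨va, hva, hra⟩ := id haR
      obtain ⟨vb, hvb, hrb⟩ := id (hb : b ∈ reachSet G W {v})
      have hab : ReachAvoid G W a b := by
        have h1 : ReachAvoid G W v a := hva.1 ▸ hra
        have h2 : ReachAvoid G W v b := hvb.1 ▸ hrb
        exact raTrans (raSymm h1) h2
      rw [reachAvoid_iff] at hab
      obtain ⟨p, hp⟩ := hab
      have hsupp : ∀ z ∈ p.support, z ∈ D :=
        fun z hz => support_subset_reachSet haR p hp z hz
      exact induce_reachable_of_walk p hsupp _ _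
    · exact ⟨⟨v, hvD⟩⟩
  -- the boundary of D is exactly W
  have hNDW : setNbhd G D ⊆ W := by
    rintro u ⟨huD, z, hzD, hadj⟩
    by_contra huW
    exact huD (reachSet_adj (hzD : z ∈ reachSet G W {v}) hadj huW)
  have hWND : W ⊆ setNbhd G D := by
    intro w hwW
    by_contra hno
    have hstep : ∀ a ∈ D, ∀ b, G.Adj a b → b ∉ W \ {w} → b ∈ D := by
      intro a haD b hadj hb
      by_cases hbW : b ∈ W
      · have hbw : b = w := by
          by_contra hne
          exact hb ⟨hbW, hne⟩
        subst hbw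
        by_cases hbD : b ∈ D
        · exact hbD
        · exact absurd ⟨hbD, a, haD, hadj⟩ hno
      · exact reachSet_adj (haD : a ∈ reachSet G W {v}) hadj hbW
    have hsep' : IsSeparator G C S (W \ {w}) := by
      intro x hx y hy hr
      rw [reachAvoid_iff] at hr
      obtain ⟨p, hp⟩ := hr
      have hxD : x ∈ D := hCD hx.1
      have hyD : y ∈ D := walk_stays_general hstep p hxD hp y p.end_mem_support
      exact hDS y hyD hy.1
    have heq := hmin (W \ {w}) Set.diff_subset hsep'
    have hw' : w ∈ W \ {w} := by rw [heq]; exact hwW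
    exact hw'.2 rfl
  have hND : setNbhd G D = W := Set.Subset.antisymm hNDW hWND
  -- D is a chip
  have hDchip : IsChip G k S D := by
    refine ⟨hconnD, ?_, ?_, ?_, ?_⟩
    · rw [hND]; exact hcard
    · rw [hND]
      intro x hx y hy hr
      exact hDS y (reachSet_trans (hx.1 : x ∈ reachSet G W {v}) hr) hy.1
    · rw [hND]
      intro W' hW'sub hW'sep
      exact hmin W' hW'sub (isSeparator_anti_X hCD hW'sep)
    · rw [hND]
      intro W' hW'sep hW'card hss
      have hRWD : reachSet G W D = D := by
        apply Set.Subset.antisymm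
        · rintro y ⟨x, hx, hr⟩
          exact reachSet_trans (hx.1 : x ∈ reachSet G W {v}) hr
        · intro x hx
          have hxW : x ∉ W := Set.disjoint_right.mp hDW hx
          exact ⟨x, ⟨hx, hxW⟩, raRefl hxW⟩
      rw [hRWD] at hss
      have hDW' : Disjoint W' D := Set.disjoint_right.mpr
        (fun x hx => reachSet_notMem_W (hss.1 hx))
      have hvW' : v ∉ W' := Set.disjoint_right.mp hDW' hvD
      have he1 : reachSet G W' C = reachSet G W' D := by
        apply Set.Subset.antisymm (reachSet_mono_X hCD)
        rintro y ⟨x, hx, hr⟩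
        have hvx : ReachAvoid G W' v x := conn_reachAvoid hconnD hDW' hvD hx.1
        exact ⟨v, ⟨hv, hvW'⟩, raTrans hvx hr⟩
      have he2 : reachSet G W C = D := by
        rw [← reach_singleton_eq hconn hdWC hv]
      exact himp W' (isSeparator_anti_X hCD hW'sep) hW'card
        (by rw [he2, he1]; exact hss)
  exact (hmaxl D hDchip hCD).symm

end ChipAux


/-- bound on the number of maximal chips (Lemma 3.3). -/
theorem maximalChips_card_le {V : Type*} [Fintype V] [DecidableEq V]
    (G : SimpleGraph V) (k : ℕ) (hk : 0 < k) (S : Set V) :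
    (maximalChips G k S).ncard ≤ 4 ^ (3 * k) * Fintype.card V := by
  classical
  have hsub : maximalChips G k S ⊆
      ⋃ v ∈ (Finset.univ : Finset V),
        (fun W => reachSet G W {v}) '' (ChipAux.ImpSet G (3 * k) {v} S) := by
    intro C hC
    obtain ⟨⟨v, hv⟩⟩ := ((SimpleGraph.connected_iff (G := G.induce C)).mp hC.1.1).2
    exact Set.mem_biUnion (Finset.mem_univ v)
      ⟨setNbhd G C, ChipAux.chip_mem_ImpSet hC.1 hv,
        (ChipAux.maximal_chip_eq_reach hC hv).symm⟩
  calc (maximalChips G k S).ncard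
      ≤ (⋃ v ∈ (Finset.univ : Finset V),
          (fun W => reachSet G W {v}) '' (ChipAux.ImpSet G (3 * k) {v} S)).ncard :=
        Set.ncard_le_ncard hsub (Set.toFinite _)
    _ ≤ ∑ v ∈ (Finset.univ : Finset V),
          ((fun W => reachSet G W {v}) '' (ChipAux.ImpSet G (3 * k) {v} S)).ncard :=
        ChipAux.ncard_biUnion_le _ _
    _ ≤ ∑ v ∈ (Finset.univ : Finset V), 4 ^ (3 * k) := by
        apply Finset.sum_le_sum
        intro v _
        exact (Set.ncard_image_le (Set.toFinite _)).trans
          (ChipAux.ImpSet_card_le G (3 * k) {v} S)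
    _ = 4 ^ (3 * k) * Fintype.card V := by
        rw [Finset.sum_const, Finset.card_univ, smul_eq_mul, Nat.mul_comm]
end

section
/- Let G be a connected finite simple graph, k a positive integer, S ⊆ V(G), let 𝒞 be the family of all inclusion-wise maximal chips, and let A = (⋂_{C ∈ 𝒞} (V(G) ∖ N_G[C])) ∪ ⋃_{C ∈ 𝒞} N_G(C), with A = V(G) when 𝒞 = ∅. Then for every connected component D of G − A there exists a chip C ∈ 𝒞 such that D ⊆ C. -/
open SimpleGraph

variable {V : Type*}

/-- every component of `G − A` is contained in a maximal chip
(Claim 3.5 / Claim `chip-containment`). -/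
theorem comp_subset_chip {V : Type*} [Fintype V] [DecidableEq V]
    (G : SimpleGraph V) (hG : G.Connected) (k : ℕ) (hk : 0 < k) (S : Set V) :
    ∀ D : Set V, IsCompOf G (chipBag G k S) D →
      ∃ C ∈ maximalChips G k S, D ⊆ C := by
  intro D hD
  obtain ⟨hDA, hDconn, _⟩ := hD
  have key : ∀ v ∈ D, (∃ C ∈ maximalChips G k S, v ∈ C) ∧
      ∀ C ∈ maximalChips G k S, v ∉ setNbhd G C := by
    intro v hv
    have hvA : v ∉ chipBag G k S := hDA hv
    simp only [chipBag, Set.mem_union, Set.mem_iInter, Set.mem_compl_iff,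
      Set.mem_iUnion, not_or, not_forall, not_not, exists_prop] at hvA
    obtain ⟨⟨C, hC, hvc⟩, h2⟩ := hvA
    have hns : ∀ C' ∈ maximalChips G k S, v ∉ setNbhd G C' := by
      intro C' hC' hmem
      exact h2 ⟨C', hC', hmem⟩
    refine ⟨⟨C, hC, ?_⟩, hns⟩
    rcases hvc with h | h
    · exact h
    · exact absurd h (hns C hC)
  obtain ⟨⟨v₀, hv₀⟩⟩ := hDconn.nonempty
  obtain ⟨⟨C, hC, hv₀C⟩, -⟩ := key v₀ hv₀
  refine ⟨C, hC, ?_⟩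
  have walkstep : ∀ (a b : D) (w : (G.induce D).Walk a b), (a : V) ∈ C → (b : V) ∈ C := by
    intro a b w
    induction w with
    | nil => exact id
    | @cons x y z h p ih =>
      intro ha
      apply ih
      by_contra hyc
      have hadj : G.Adj (x : V) (y : V) := h
      have : (y : V) ∈ setNbhd G C := ⟨hyc, x, ha, hadj⟩
      exact (key y y.2).2 C hC this
  intro u hu
  obtain ⟨w⟩ := hDconn.preconnected ⟨v₀, hv₀⟩ ⟨u, hu⟩
  exact walkstep _ _ w hv₀C
end

section
/- Let G be a connected finite simple graph, k a positive integer, and S ⊆ V(G) a set that is (2k,k)-unbreakable in G. Let 𝒞 be the family of all inclusion-wise maximal chips and let A = (⋂_{C ∈ 𝒞} (V(G) ∖ N_G[C])) ∪ ⋃_{C ∈ 𝒞} N_G(C), with A = V(G) when 𝒞 = ∅. Then A is (τ,k)-unbreakable in G, where τ = (3k)²·8^{3k} + 2k. -/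
open SimpleGraph

variable {V : Type*}

/-! ### Auxiliary toolkit -/

section Toolkit

variable {G : SimpleGraph V} {W W' X C D S P Q R : Set V} {x y z u v : V}

lemma mem_setNbhd_iff : v ∈ setNbhd G C ↔ v ∉ C ∧ ∃ u ∈ C, G.Adj u v := Iff.rfl

lemma setNbhd_not_mem (h : v ∈ setNbhd G C) : v ∉ C := h.1

/-- Transfer a walk along an adjacency-preserving condition on a region. -/
lemma walk_transfer {G₁ G₂ : SimpleGraph V} {P : Set V}
    (hadj : ∀ a b, a ∈ P → b ∈ P → G₁.Adj a b → G₂.Adj a b) :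
    ∀ {x y : V} (w : G₁.Walk x y), (∀ v ∈ w.support, v ∈ P) →
      ∃ w' : G₂.Walk x y, ∀ v ∈ w'.support, v ∈ P := by
  intro x y w
  induction w with
  | nil => intro h; exact ⟨SimpleGraph.Walk.nil, h⟩
  | @cons a b c hab p ih =>
    intro h
    have ha : a ∈ P := h a (by simp)
    have hb : b ∈ P := h b (by simp [SimpleGraph.Walk.support_cons])
    obtain ⟨w', hw'⟩ := ih (fun v hv => h v (by simp [SimpleGraph.Walk.support_cons, hv]))
    exact ⟨SimpleGraph.Walk.cons (hadj a b ha hb hab) w', by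
      intro v hv
      rw [SimpleGraph.Walk.support_cons] at hv
      rcases List.mem_cons.1 hv with h1 | h2
      · exact h1 ▸ ha
      · exact hw' v h2⟩

lemma reachable_induce_of_walk {C : Set V} :
    ∀ {x y : V} (w : G.Walk x y), (∀ v ∈ w.support, v ∈ C) →
      ∀ (hx : x ∈ C) (hy : y ∈ C), (G.induce C).Reachable ⟨x, hx⟩ ⟨y, hy⟩ := by
  intro x y w
  induction w with
  | nil => intro _ hx hy; rfl
  | @cons a b c hab p ih =>
    intro h hx hy
    have hb : b ∈ C := h b (by simp [SimpleGraph.Walk.support_cons])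
    have h1 : (G.induce C).Adj ⟨a, hx⟩ ⟨b, hb⟩ := hab
    exact (h1.reachable).trans
      (ih (fun v hv => h v (by simp [SimpleGraph.Walk.support_cons, hv])) hb hy)

lemma walk_of_walk_induce {C : Set V} :
    ∀ {a b : ↥C} (w : (G.induce C).Walk a b),
      ∃ w' : G.Walk a.1 b.1, ∀ v ∈ w'.support, v ∈ C := by
  intro a b w
  induction w with
  | nil => exact ⟨SimpleGraph.Walk.nil, by rintro v hv; simp at hv; subst hv; exact Subtype.coe_prop _⟩
  | @cons p q r hpq w ih =>
    obtain ⟨w', hw'⟩ := ih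
    refine ⟨SimpleGraph.Walk.cons hpq w', ?_⟩
    intro v hv
    change v ∈ (p : V) :: w'.support at hv
    rcases List.mem_cons.1 hv with h1 | h2
    · subst h1; exact p.2
    · exact hw' v h2

lemma reachAvoid_iff_walk :
    ReachAvoid G W x y ↔ ∃ w : G.Walk x y, ∀ v ∈ w.support, v ∉ W := by
  constructor
  · rintro ⟨hx, hy, hr⟩
    obtain ⟨w⟩ := hr
    obtain ⟨w', hw⟩ := walk_of_walk_induce w
    exact ⟨w', hw⟩
  · rintro ⟨w, hw⟩
    have hx : x ∈ Wᶜ := hw x (by simp)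
    have hy : y ∈ Wᶜ := hw y (by simp)
    exact ⟨hx, hy, reachable_induce_of_walk w hw hx hy⟩

lemma ReachAvoid.refl (h : x ∉ W) : ReachAvoid G W x x :=
  ⟨h, h, Reachable.refl _⟩

lemma ReachAvoid.notmem_left (h : ReachAvoid G W x y) : x ∉ W := h.1
lemma ReachAvoid.notmem_right (h : ReachAvoid G W x y) : y ∉ W := h.2.1

lemma ReachAvoid.symm (h : ReachAvoid G W x y) : ReachAvoid G W y x := by
  obtain ⟨hx, hy, hr⟩ := h; exact ⟨hy, hx, hr.symm⟩

lemma ReachAvoid.trans (h : ReachAvoid G W x y) (h' : ReachAvoid G W y z) :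
    ReachAvoid G W x z := by
  obtain ⟨hx, hy, hr⟩ := h; obtain ⟨hy', hz, hr'⟩ := h'
  exact ⟨hx, hz, hr.trans hr'⟩

lemma ReachAvoid.adj (h : ReachAvoid G W x y) (ha : G.Adj y z) (hz : z ∉ W) :
    ReachAvoid G W x z := by
  refine h.trans ⟨h.notmem_right, hz, ?_⟩
  exact SimpleGraph.Adj.reachable (by exact ha : (G.induce Wᶜ).Adj ⟨y, h.notmem_right⟩ ⟨z, hz⟩)

lemma mem_reachSet_iff : y ∈ reachSet G W X ↔ ∃ x ∈ X \ W, ReachAvoid G W x y := Iff.rfl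

lemma reachSet_not_mem (h : y ∈ reachSet G W X) : y ∉ W := by
  obtain ⟨x, _, hr⟩ := h; exact hr.notmem_right

lemma diff_subset_reachSet : X \ W ⊆ reachSet G W X :=
  fun x hx => ⟨x, hx, ReachAvoid.refl hx.2⟩

lemma mem_reachSet_self (hx : x ∈ X) (hw : x ∉ W) : x ∈ reachSet G W X :=
  diff_subset_reachSet ⟨hx, hw⟩

lemma reachSet_adj (h : y ∈ reachSet G W X) (ha : G.Adj y z) (hz : z ∉ W) :
    z ∈ reachSet G W X := by
  obtain ⟨x, hx, hr⟩ := h; exact ⟨x, hx, hr.adj ha hz⟩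

/-- Vertices reachable from a point of a "closed" set stay inside it. -/
lemma mem_of_reachAvoid_closed {C : Set V}
    (hC : ∀ u ∈ C, ∀ z, G.Adj u z → z ∉ W → z ∈ C)
    (hx : x ∈ C) (h : ReachAvoid G W x y) : y ∈ C := by
  obtain ⟨w, hw⟩ := reachAvoid_iff_walk.1 h
  clear h
  induction w with
  | nil => exact hx
  | @cons a b c hab p ih =>
    have hb : b ∉ W := hw b (by simp [SimpleGraph.Walk.support_cons])
    exact ih (hC a hx b hab hb)
      (fun v hv => hw v (by simp [SimpleGraph.Walk.support_cons, hv]))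

lemma reachSet_subset_closed {C : Set V}
    (hC : ∀ u ∈ C, ∀ z, G.Adj u z → z ∉ W → z ∈ C)
    (hX : X \ W ⊆ C) : reachSet G W X ⊆ C := by
  rintro y ⟨x, hx, hr⟩
  exact mem_of_reachAvoid_closed hC (hX hx) hr

lemma setNbhd_reachSet_subset : setNbhd G (reachSet G W X) ⊆ W := by
  rintro v ⟨hv, u, hu, ha⟩
  by_contra hvw
  exact hv (reachSet_adj hu ha hvw)

lemma reachSet_trans (h : y ∈ reachSet G W (reachSet G W X)) : y ∈ reachSet G W X := by
  obtain ⟨x, hx, hr⟩ := h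
  obtain ⟨x', hx', hr'⟩ := hx.1
  exact ⟨x', hx', hr'.trans hr⟩

lemma reachSet_reachSet : reachSet G W (reachSet G W X) = reachSet G W X := by
  apply Set.Subset.antisymm
  · exact fun y hy => reachSet_trans hy
  · intro y hy
    exact mem_reachSet_self hy (reachSet_not_mem hy)

lemma reachSet_mono_source (h : X ⊆ X') : reachSet G W X ⊆ reachSet G W X' := by
  rintro y ⟨x, hx, hr⟩; exact ⟨x, ⟨h hx.1, hx.2⟩, hr⟩

lemma ReachAvoid.mono (hw : W' ⊆ W) (h : ReachAvoid G W x y) : ReachAvoid G W' x y := by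
  obtain ⟨w, hsup⟩ := reachAvoid_iff_walk.1 h
  exact reachAvoid_iff_walk.2 ⟨w, fun v hv hmem => hsup v hv (hw hmem)⟩

lemma reachSet_anti (hw : W' ⊆ W) : reachSet G W X ⊆ reachSet G W' X := by
  rintro y ⟨x, hx, hr⟩
  exact ⟨x, ⟨hx.1, fun hc => hx.2 (hw hc)⟩, hr.mono hw⟩

lemma isSeparator_iff_reach :
    IsSeparator G X S W ↔ ∀ s ∈ S, s ∉ reachSet G W X := by
  constructor
  · rintro h s hs ⟨x, hx, hr⟩
    exact h x hx s ⟨hs, hr.notmem_right⟩ hr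
  · rintro h x hx y hy hr
    exact h y hy.1 ⟨x, hx, hr⟩

lemma IsSeparator.anti_source (h : IsSeparator G X' S W) (hx : X ⊆ X') :
    IsSeparator G X S W := fun x hx' y hy hr => h x ⟨hx hx'.1, hx'.2⟩ y hy hr

end Toolkit

section Toolkit2

variable {G : SimpleGraph V} {W W' W₂ X X' C D S P Q R R' : Set V} {x y z u v t : V}

/-- Walk-connectivity of a vertex set. -/
def WConn (G : SimpleGraph V) (C : Set V) : Prop :=
  ∀ x ∈ C, ∀ y ∈ C, ∃ w : G.Walk x y, ∀ v ∈ w.support, v ∈ C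

lemma wconn_of_connected (h : (G.induce C).Connected) : WConn G C := by
  intro x hx y hy
  obtain ⟨w⟩ := h.preconnected ⟨x, hx⟩ ⟨y, hy⟩
  exact walk_of_walk_induce w

lemma connected_of_wconn (hne : C.Nonempty) (h : WConn G C) : (G.induce C).Connected := by
  rw [SimpleGraph.connected_iff]
  refine ⟨?_, ⟨⟨hne.choose, hne.choose_spec⟩⟩⟩
  rintro ⟨x, hx⟩ ⟨y, hy⟩
  obtain ⟨w, hw⟩ := h x hx y hy
  exact reachable_induce_of_walk w hw hx hy

lemma wconn_singleton : WConn G {t} := by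
  rintro x hx y hy
  rcases hx; rcases hy
  exact ⟨SimpleGraph.Walk.nil, by simp⟩

/-- All vertices on an avoiding walk from a source are in the reach set. -/
lemma support_mem_reachSet [DecidableEq V] (hx : x ∈ X \ W) (w : G.Walk x y)
    (hw : ∀ v ∈ w.support, v ∉ W) : ∀ v ∈ w.support, v ∈ reachSet G W X := by
  intro v hv
  refine ⟨x, hx, reachAvoid_iff_walk.2 ⟨w.takeUntil v hv, ?_⟩⟩
  intro z hz
  exact hw z (SimpleGraph.Walk.support_takeUntil_subset w hv hz)

/-- Any point of the reach set is connected to the source by a walk inside the reach set. -/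
lemma exists_walk_in_reachSet [DecidableEq V] (hy : y ∈ reachSet G W X) :
    ∃ x, x ∈ X \ W ∧ ∃ w : G.Walk x y, ∀ v ∈ w.support, v ∈ reachSet G W X := by
  obtain ⟨x, hx, hr⟩ := hy
  obtain ⟨w, hw⟩ := reachAvoid_iff_walk.1 hr
  exact ⟨x, hx, w, support_mem_reachSet hx w hw⟩

lemma wconn_reachSet [DecidableEq V] (hX : WConn G X) (hd : Disjoint X W) :
    WConn G (reachSet G W X) := by
  intro z hz z' hz'
  obtain ⟨x, hx, w1, hw1⟩ := exists_walk_in_reachSet hz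
  obtain ⟨x', hx', w2, hw2⟩ := exists_walk_in_reachSet hz'
  obtain ⟨w0, hw0⟩ := hX x hx.1 x' hx'.1
  have hw0' : ∀ v ∈ w0.support, v ∈ reachSet G W X := fun v hv =>
    mem_reachSet_self (hw0 v hv) (hd.ne_of_mem (hw0 v hv) · rfl |>.elim)
  refine ⟨(w1.reverse.append w0).append w2, ?_⟩
  intro v hv
  rcases (SimpleGraph.Walk.mem_support_append_iff _ _).1 hv with h1 | h2
  · rcases (SimpleGraph.Walk.mem_support_append_iff _ _).1 h1 with h3 | h4
    · exact hw1 v (by rwa [SimpleGraph.Walk.support_reverse, List.mem_reverse] at h3)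
    · exact hw0' v h4
  · exact hw2 v h2

lemma wconn_insert_adj (hR : WConn G R) (hu : u ∈ R) (ha : G.Adj u v) :
    WConn G (insert v R) := by
  have key : ∀ y ∈ R, ∃ w : G.Walk v y, ∀ z ∈ w.support, z ∈ insert v R := by
    intro y hy
    obtain ⟨w, hw⟩ := hR u hu y hy
    refine ⟨SimpleGraph.Walk.cons ha.symm w, ?_⟩
    intro z hz
    rw [SimpleGraph.Walk.support_cons] at hz
    rcases List.mem_cons.1 hz with h1 | h2
    · exact h1 ▸ Set.mem_insert _ _
    · exact Set.mem_insert_of_mem _ (hw z h2)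
  rintro x hx y hy
  rcases Set.mem_insert_iff.1 hx with rfl | hxR
  · rcases Set.mem_insert_iff.1 hy with rfl | hyR
    · exact ⟨SimpleGraph.Walk.nil, by simp⟩
    · exact key y hyR
  · rcases Set.mem_insert_iff.1 hy with rfl | hyR
    · obtain ⟨w, hw⟩ := key x hxR
      exact ⟨w.reverse, by
        intro z hz
        rw [SimpleGraph.Walk.support_reverse, List.mem_reverse] at hz
        exact hw z hz⟩
    · obtain ⟨w, hw⟩ := hR x hxR y hyR
      exact ⟨w, fun z hz => Set.mem_insert_of_mem _ (hw z hz)⟩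

/-- Submodularity of the vertex boundary. -/
lemma setNbhd_submodular [Fintype V] (G : SimpleGraph V) (P Q : Set V) :
    (setNbhd G (P ∪ Q)).ncard + (setNbhd G (P ∩ Q)).ncard ≤
      (setNbhd G P).ncard + (setNbhd G Q).ncard := by
  have h1 : setNbhd G (P ∪ Q) ∪ setNbhd G (P ∩ Q) ⊆ setNbhd G P ∪ setNbhd G Q := by
    rintro x (⟨hx, u, hu, ha⟩ | ⟨hx, u, hu, ha⟩)
    · rcases hu with hu | hu
      · exact Or.inl ⟨fun hc => hx (Or.inl hc), u, hu, ha⟩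
      · exact Or.inr ⟨fun hc => hx (Or.inr hc), u, hu, ha⟩
    · rcases Classical.em (x ∈ P) with hP | hP
      · exact Or.inr ⟨fun hc => hx ⟨hP, hc⟩, u, hu.2, ha⟩
      · exact Or.inl ⟨hP, u, hu.1, ha⟩
  have h2 : setNbhd G (P ∪ Q) ∩ setNbhd G (P ∩ Q) ⊆ setNbhd G P ∩ setNbhd G Q := by
    rintro x ⟨⟨hx, _⟩, ⟨hx', u, hu, ha⟩⟩
    exact ⟨⟨fun hc => hx (Or.inl hc), u, hu.1, ha⟩, ⟨fun hc => hx (Or.inr hc), u, hu.2, ha⟩⟩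
  calc (setNbhd G (P ∪ Q)).ncard + (setNbhd G (P ∩ Q)).ncard
      = (setNbhd G (P ∪ Q) ∪ setNbhd G (P ∩ Q)).ncard
        + (setNbhd G (P ∪ Q) ∩ setNbhd G (P ∩ Q)).ncard :=
        (Set.ncard_union_add_ncard_inter _ _ (Set.toFinite _) (Set.toFinite _)).symm
    _ ≤ (setNbhd G P ∪ setNbhd G Q).ncard + (setNbhd G P ∩ setNbhd G Q).ncard := by
        have := Set.ncard_le_ncard h1 (Set.toFinite _)
        have := Set.ncard_le_ncard h2 (Set.toFinite _)
        omega
    _ = (setNbhd G P).ncard + (setNbhd G Q).ncard :=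
        Set.ncard_union_add_ncard_inter _ _ (Set.toFinite _) (Set.toFinite _)

/-- The reach set avoiding the boundary of a superset `R` of the sources stays in `R`. -/
lemma reachSet_nbhd_subset (hX : X \ setNbhd G R ⊆ R) :
    reachSet G (setNbhd G R) X ⊆ R := by
  apply reachSet_subset_closed _ hX
  intro a ha z haz hz
  by_contra hzR
  exact hz ⟨hzR, a, ha, haz⟩

end Toolkit2

section Toolkit3

variable [Fintype V] [DecidableEq V]
variable {G : SimpleGraph V} {W W' W₂ X X'' C D S P Q R R' : Set V} {x y z u v t : V}

lemma subset_reachSet_of_disjoint (hd : Disjoint X W) : X ⊆ reachSet G W X :=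
  fun x hx => mem_reachSet_self hx (fun hc => (hd.ne_of_mem hx hc) rfl)

/-- The reach set of the boundary of a union of two reach sets is that union. -/
lemma reachSet_nbhd_union (hd : Disjoint X W) (hd' : Disjoint X W') :
    reachSet G (setNbhd G (reachSet G W X ∪ reachSet G W' X)) X
      = reachSet G W X ∪ reachSet G W' X := by
  set R := reachSet G W X
  set R' := reachSet G W' X
  set N := setNbhd G (R ∪ R')
  have hXR : X ⊆ R := subset_reachSet_of_disjoint hd
  apply Set.Subset.antisymm
  · exact reachSet_nbhd_subset (fun x hx => Or.inl (hXR hx.1))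
  · have key : ∀ (Wa : Set V), Disjoint X Wa → reachSet G Wa X ⊆ R ∪ R' →
        reachSet G Wa X ⊆ reachSet G N X := by
      intro Wa hda hsub z hz
      obtain ⟨x, hx, w, hw⟩ := exists_walk_in_reachSet hz
      have hsupN : ∀ v ∈ w.support, v ∉ N := by
        intro v hv hvN
        exact hvN.1 (hsub (hw v hv))
      exact ⟨x, ⟨hx.1, fun hc => hc.1 (Or.inl (hXR hx.1))⟩,
        reachAvoid_iff_walk.2 ⟨w, hsupN⟩⟩
    rintro y (hy | hy)
    · exact key W hd Set.subset_union_left hy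
    · exact key W' hd' Set.subset_union_right hy

lemma reachSet_nbhd_self (hd : Disjoint X W) :
    reachSet G (setNbhd G (reachSet G W X)) X = reachSet G W X := by
  have := reachSet_nbhd_union (G := G) (X := X) hd hd
  simpa using this

/-- For an important separator disjoint from the source,
the boundary of the reach set is the separator itself. -/
lemma important_nbhd_reach (h : IsImportantSeparator G X S W) (hd : Disjoint W X) :
    setNbhd G (reachSet G W X) = W := by
  apply h.2.1 _ setNbhd_reachSet_subset
  rw [isSeparator_iff_reach]
  intro s hs hmem
  have h1 : reachSet G (setNbhd G (reachSet G W X)) X = reachSet G W X :=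
    reachSet_nbhd_self hd.symm
  rw [h1] at hmem
  exact (isSeparator_iff_reach.1 h.1) s hs hmem

/-- Separator whose reach avoids `S`. -/
lemma isSeparator_of_reach_subset (hsub : reachSet G W X ⊆ R) (hRS : R ∩ S = ∅) :
    IsSeparator G X S W := by
  rw [isSeparator_iff_reach]
  intro s hs hmem
  exact Set.eq_empty_iff_forall_notMem.1 hRS s ⟨hsub hmem, hs⟩

lemma sep_reach_disjoint_S (h : IsSeparator G X S W) :
    reachSet G W X ∩ S = ∅ := by
  rw [Set.eq_empty_iff_forall_notMem]
  rintro s ⟨hmem, hs⟩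
  exact (isSeparator_iff_reach.1 h) s hs hmem

/-- Enlarging the source inside the reach set preserves importance. -/
lemma important_enlarge (h : IsImportantSeparator G X S W) (hd : Disjoint W X)
    (hXX : X ⊆ X'') (hXR : X'' ⊆ reachSet G W X) :
    IsImportantSeparator G X'' S W := by
  have hreach_eq : reachSet G W X'' = reachSet G W X := by
    apply Set.Subset.antisymm
    · rintro y ⟨x'', hx'', hr⟩
      obtain ⟨x, hx, hr'⟩ := hXR hx''.1
      exact ⟨x, hx, hr'.trans hr⟩
    · exact reachSet_mono_source hXX
  refine ⟨?_, ?_, ?_⟩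
  · rw [isSeparator_iff_reach, hreach_eq]
    exact isSeparator_iff_reach.1 h.1
  · intro W'' hsub hsep
    exact h.2.1 W'' hsub (hsep.anti_source hXX)
  · intro W₂ hsep hcard hss
    rw [hreach_eq] at hss
    -- X'' ⊆ reachSet G W X ⊆ reachSet G W₂ X''
    have hRW₂ : reachSet G W X ⊆ reachSet G W₂ X'' := subset_of_ssubset hss
    have hX''W₂ : Disjoint X'' W₂ := by
      rw [Set.disjoint_left]
      intro a ha hc
      exact reachSet_not_mem (hRW₂ (hXR ha)) hc
    have heq2 : reachSet G W₂ X'' = reachSet G W₂ X := by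
      apply Set.Subset.antisymm
      · rintro y ⟨x'', hx'', hr⟩
        -- walk from X to x'' inside reachSet G W X, which avoids W₂
        obtain ⟨x, hx, w, hw⟩ := exists_walk_in_reachSet (hXR hx''.1)
        have : ReachAvoid G W₂ x x'' := reachAvoid_iff_walk.2 ⟨w, fun a ha hc =>
          reachSet_not_mem (hRW₂ (hw a ha)) hc⟩
        exact ⟨x, ⟨hx.1, fun hc => reachSet_not_mem (hRW₂ (hXR (hXX hx.1))) hc⟩,
          this.trans hr⟩
      · exact reachSet_mono_source hXX
    rw [heq2] at hss
    exact h.2.2 W₂ (hsep.anti_source hXX) hcard hss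

/-- A chip is its own reach set from any of its points. -/
lemma chip_reach_eq {k : ℕ} (h : IsChip G k S C) (ht : t ∈ C) :
    reachSet G (setNbhd G C) {t} = C := by
  apply Set.Subset.antisymm
  · apply reachSet_subset_closed
    · intro a ha z haz hz
      by_contra hzC
      exact hz ⟨hzC, a, ha, haz⟩
    · rintro a ⟨rfl, _⟩; exact ht
  · intro z hz
    obtain ⟨w, hw⟩ := (wconn_of_connected h.1) t ht z hz
    exact ⟨t, ⟨rfl, fun hc => hc.1 ht⟩,
      reachAvoid_iff_walk.2 ⟨w, fun a ha hc => hc.1 (hw a ha)⟩⟩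

lemma chip_disjoint_S {k : ℕ} (h : IsChip G k S C) : C ∩ S = ∅ := by
  rw [Set.eq_empty_iff_forall_notMem]
  rintro s ⟨hsC, hsS⟩
  have hsW : s ∉ setNbhd G C := fun hc => hc.1 hsC
  exact h.2.2.1 s ⟨hsC, hsW⟩ s ⟨hsS, hsW⟩ (ReachAvoid.refl hsW)

lemma chip_wconn {k : ℕ} (h : IsChip G k S C) : WConn G C := wconn_of_connected h.1

/-- Shrinking the source of a chip's boundary to a single point preserves importance. -/
lemma chip_important_singleton {k : ℕ} (h : IsChip G k S C) (ht : t ∈ C) :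
    IsImportantSeparator G {t} S (setNbhd G C) := by
  set W := setNbhd G C with hW
  have himp := h.2.2
  have hreach_t : reachSet G W {t} = C := chip_reach_eq h ht
  have hreach_C : reachSet G W C = C := by
    apply Set.Subset.antisymm
    · rintro y ⟨x, hx, hr⟩
      have hx' : x ∈ reachSet G W {t} := hreach_t ▸ hx.1
      obtain ⟨x0, hx0, hr0⟩ := hx'
      exact hreach_t ▸ (⟨x0, hx0, hr0.trans hr⟩ : y ∈ reachSet G W {t})
    · intro z hz
      exact mem_reachSet_self hz (fun hc => hc.1 hz)
  -- transfer of separation between sources {t} and C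
  have key : ∀ W₂ : Set V, Disjoint C W₂ → reachSet G W₂ {t} = reachSet G W₂ C := by
    intro W₂ hd
    apply Set.Subset.antisymm
    · exact reachSet_mono_source (by simp [ht])
    · rintro y ⟨x, hx, hr⟩
      obtain ⟨w, hw⟩ := (chip_wconn h) t ht x hx.1
      have hra : ReachAvoid G W₂ t x := reachAvoid_iff_walk.2 ⟨w, fun a ha hc =>
        (hd.ne_of_mem (hw a ha) hc) rfl⟩
      exact ⟨t, ⟨rfl, fun hc => (hd.ne_of_mem ht hc) rfl⟩, hra.trans hr⟩
  refine ⟨h.2.2.1.anti_source (by simp [ht]), ?_, ?_⟩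
  · intro W'' hsub hsep
    apply himp.2.1 W'' hsub
    rw [isSeparator_iff_reach]
    have hd : Disjoint C W'' := Set.disjoint_left.2 (fun a ha hc => (hsub hc).1 ha)
    rw [← key W'' hd]
    exact isSeparator_iff_reach.1 hsep
  · intro W₂ hsep hcard hss
    rw [hreach_t] at hss
    have hd : Disjoint C W₂ := by
      rw [Set.disjoint_left]
      intro a ha hc
      exact reachSet_not_mem (subset_of_ssubset hss ha) hc
    have h2 := key W₂ hd
    apply himp.2.2 W₂ ?_ hcard
    · rw [hreach_C, ← h2]
      exact hss
    · rw [isSeparator_iff_reach, ← h2]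
      exact isSeparator_iff_reach.1 hsep

end Toolkit3

section DelVertex

variable {G : SimpleGraph V} {W W' W₂ X S : Set V} {x y z u v : V}

/-- `G` with all edges at `v` removed. -/
def Gdel (G : SimpleGraph V) (v : V) : SimpleGraph V where
  Adj a b := G.Adj a b ∧ a ≠ v ∧ b ≠ v
  symm := by constructor; rintro a b ⟨h1, h2, h3⟩; exact ⟨h1.symm, h3, h2⟩
  loopless := ⟨fun a h => G.loopless.irrefl a h.1⟩

lemma Gdel_support_ne {v : V} :
    ∀ {x y : V} (w : (Gdel G v).Walk x y), x ≠ v → ∀ z ∈ w.support, z ≠ v := by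
  intro x y w
  induction w with
  | nil => intro hx z hz; simp at hz; exact hz ▸ hx
  | @cons a b c hab p ih =>
    intro hx z hz
    rw [SimpleGraph.Walk.support_cons] at hz
    rcases List.mem_cons.1 hz with h1 | h2
    · exact h1 ▸ hx
    · exact ih (show G.Adj a b ∧ a ≠ v ∧ b ≠ v from hab).2.2 z h2

/-- Reach sets in `Gdel G v` vs `G`. -/
lemma reach_del_eq (hvX : v ∉ X) :
    reachSet (Gdel G v) W X = reachSet G (W ∪ {v}) X := by
  apply Set.Subset.antisymm
  · rintro y ⟨x, hx, hr⟩
    obtain ⟨w, hw⟩ := reachAvoid_iff_walk.1 hr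
    have hne : ∀ z ∈ w.support, z ≠ v := Gdel_support_ne w (fun hc => hvX (hc ▸ hx.1))
    obtain ⟨w', hw'⟩ := walk_transfer (G₁ := Gdel G v) (G₂ := G)
      (P := (W ∪ {v})ᶜ) (fun a b _ _ hab => (show G.Adj a b ∧ a ≠ v ∧ b ≠ v from hab).1) w
      (fun z hz => by
        rintro (hc | hc)
        · exact hw z hz hc
        · exact hne z hz hc)
    exact ⟨x, ⟨hx.1, fun hc => (by
        rcases hc with hc | hc
        · exact hx.2 hc
        · exact hvX (hc ▸ hx.1))⟩,
      reachAvoid_iff_walk.2 ⟨w', hw'⟩⟩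
  · rintro y ⟨x, hx, hr⟩
    obtain ⟨w, hw⟩ := reachAvoid_iff_walk.1 hr
    obtain ⟨w', hw'⟩ := walk_transfer (G₁ := G) (G₂ := Gdel G v)
      (P := (W ∪ {v})ᶜ) (fun a b ha hb hab =>
        (show G.Adj a b ∧ a ≠ v ∧ b ≠ v from ⟨hab, fun hc => ha (Or.inr hc), fun hc => hb (Or.inr hc)⟩)) w hw
    exact ⟨x, ⟨hx.1, fun hc => hx.2 (Or.inl hc)⟩,
      reachAvoid_iff_walk.2 ⟨w', fun z hz hc => hw' z hz (Or.inl hc)⟩⟩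

lemma sep_del_to (hvX : v ∉ X) (h : IsSeparator (Gdel G v) X S W) :
    IsSeparator G X S (W ∪ {v}) := by
  rw [isSeparator_iff_reach] at h ⊢
  intro s hs hmem
  exact h s hs (by rwa [reach_del_eq hvX])

lemma sep_del_from (hvX : v ∉ X) (hvW : v ∈ W) (h : IsSeparator G X S W) :
    IsSeparator (Gdel G v) X S (W \ {v}) := by
  rw [isSeparator_iff_reach] at h ⊢
  intro s hs hmem
  rw [reach_del_eq hvX] at hmem
  apply h s hs
  have : W \ {v} ∪ {v} = W := by
    ext a; simp only [Set.mem_union, Set.mem_diff, Set.mem_singleton_iff]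
    constructor
    · rintro (⟨h1, _⟩ | rfl); exact h1; exact hvW
    · intro ha; by_cases hav : a = v; exact Or.inr hav; exact Or.inl ⟨ha, hav⟩
  rwa [this] at hmem

end DelVertex

section Counting

variable [Fintype V] [DecidableEq V]
variable {G : SimpleGraph V} {W W' W₂ X S : Set V} {x y z u v : V}

lemma important_del (hvX : v ∉ X) (hvW : v ∈ W)
    (h : IsImportantSeparator G X S W) :
    IsImportantSeparator (Gdel G v) X S (W \ {v}) := by
  have hWv : W \ {v} ∪ {v} = W := by
    ext a; simp only [Set.mem_union, Set.mem_diff, Set.mem_singleton_iff]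
    constructor
    · rintro (⟨h1, _⟩ | rfl); exact h1; exact hvW
    · intro ha; by_cases hav : a = v; exact Or.inr hav; exact Or.inl ⟨ha, hav⟩
  refine ⟨sep_del_from hvX hvW h.1, ?_, ?_⟩
  · intro W'' hsub hsep
    have h1 : IsSeparator G X S (W'' ∪ {v}) := sep_del_to hvX hsep
    have h2 : W'' ∪ {v} ⊆ W := by
      intro a ha
      rcases (Set.mem_union a W'' {v}).1 ha with ha | ha
      · exact (hsub ha).1
      · rw [Set.mem_singleton_iff] at ha
        rw [ha]; exact hvW
    have h3 := h.2.1 _ h2 h1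
    have hvW'' : v ∉ W'' := fun hc => (hsub hc).2 rfl
    rw [← h3]
    ext a
    constructor
    · intro ha
      refine ⟨(Set.mem_union a W'' {v}).2 (Or.inl ha), ?_⟩
      intro hc
      exact hvW'' ((Set.mem_singleton_iff.1 hc) ▸ ha)
    · intro ha
      rcases (Set.mem_union a W'' {v}).1 ha.1 with h5 | h5
      · exact h5
      · exact absurd h5 ha.2
  · intro W₂ hsep hcard hss
    have h1 : IsSeparator G X S (W₂ ∪ {v}) := sep_del_to hvX hsep
    have h2 : (W₂ ∪ {v}).ncard ≤ W.ncard := by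
      have e1 : (W \ {v}).ncard + 1 = W.ncard := Set.ncard_diff_singleton_add_one hvW
      have e2 : (W₂ ∪ {v}).ncard ≤ W₂.ncard + 1 := by
        have := Set.ncard_union_le W₂ ({v} : Set V)
        simpa using this
      omega
    apply h.2.2 (W₂ ∪ {v}) h1 h2
    have e1 := reach_del_eq (G := G) (W := W \ {v}) (v := v) hvX
    rw [hWv] at e1
    have e2 := reach_del_eq (G := G) (W := W₂) (v := v) hvX
    rw [← e1, ← e2]
    exact hss

/-- The family of important `X`–`S` separators of size at most `p`, disjoint from `X`. -/
def ImpFam (G : SimpleGraph V) (X S : Set V) (p : ℕ) : Set (Set V) :=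
  {W | IsImportantSeparator G X S W ∧ W.ncard ≤ p ∧ Disjoint W X}

theorem impFam_card :
    ∀ (μ : ℕ) (G : SimpleGraph V) (X S : Set V) (p : ℕ), X.Nonempty → WConn G X →
    (∀ W', IsSeparator G X S W' → Disjoint W' X → 2*p ≤ μ + W'.ncard) →
    (ImpFam G X S p).ncard ≤ 2^μ := by
  intro μ
  induction μ with
  | zero =>
    intro G X S p hne hconn hmin
    have hsub : ImpFam G X S p ⊆ {∅} := by
      intro W hW
      have h1 := hmin W hW.1.1 hW.2.2
      have h2 := hW.2.1
      have h3 : W.ncard = 0 := by omega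
      have h4 : W = ∅ := (Set.ncard_eq_zero (Set.toFinite W)).1 h3
      simp [h4]
    calc (ImpFam G X S p).ncard ≤ ({∅} : Set (Set V)).ncard :=
          Set.ncard_le_ncard hsub (Set.toFinite _)
      _ = 1 := Set.ncard_singleton _
      _ ≤ 2^0 := by norm_num
  | succ μ ih =>
    intro G X S p hne hconn hmin
    by_cases hfam : (ImpFam G X S p).Nonempty
    swap
    · rw [Set.not_nonempty_iff_eq_empty] at hfam
      simp [hfam]
    obtain ⟨W₀, hW₀⟩ := hfam
    set Ssep := {W : Set V | IsSeparator G X S W ∧ Disjoint W X} with hSsepdef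
    have hSne : Ssep.Nonempty := ⟨W₀, hW₀.1.1, hW₀.2.2⟩
    obtain ⟨Wmin, hWmin, hminp⟩ :=
      Set.exists_min_image Ssep Set.ncard (Set.toFinite _) hSne
    set lam := Wmin.ncard with hlamdef
    set Slam := {W ∈ Ssep | W.ncard ≤ lam} with hSlamdef
    have hSlamne : Slam.Nonempty := ⟨Wmin, hWmin, le_rfl⟩
    obtain ⟨Wb, hWb, hmax⟩ := Set.exists_max_image Slam
      (fun W => (reachSet G W X).ncard) (Set.toFinite _) hSlamne
    set Rm := reachSet G Wb X with hRmdef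
    set Wm := setNbhd G Rm with hWmdef
    have hdXWb : Disjoint X Wb := hWb.1.2.symm
    have hXRm : X ⊆ Rm := subset_reachSet_of_disjoint hdXWb
    have hWmRm : ∀ a ∈ Wm, a ∉ Rm := fun a ha => ha.1
    have hreachWm : reachSet G Wm X = Rm := reachSet_nbhd_self hdXWb
    have hRmS : Rm ∩ S = ∅ := sep_reach_disjoint_S hWb.1.1
    have hWmSsep : Wm ∈ Ssep := by
      refine ⟨isSeparator_of_reach_subset (le_of_eq hreachWm) hRmS, ?_⟩
      rw [Set.disjoint_left]
      intro a ha hax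
      exact hWmRm a ha (hXRm hax)
    have hWmlam : Wm.ncard ≤ lam :=
      le_trans (Set.ncard_le_ncard setNbhd_reachSet_subset (Set.toFinite _)) hWb.2
    have hWmSlam : Wm ∈ Slam := ⟨hWmSsep, hWmlam⟩
    -- (D) every small separator's reach is inside Rm
    have hD : ∀ W' ∈ Slam, reachSet G W' X ⊆ Rm := by
      intro W' hW'
      set R' := reachSet G W' X with hR'def
      have hdXW' : Disjoint X W' := hW'.1.2.symm
      have hXR' : X ⊆ R' := subset_reachSet_of_disjoint hdXW'
      set NR' := setNbhd G R' with hNR'def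
      have hNR'sub : NR' ⊆ W' := setNbhd_reachSet_subset
      have hR'S : R' ∩ S = ∅ := sep_reach_disjoint_S hW'.1.1
      have hNR'Ssep : NR' ∈ Ssep := by
        refine ⟨isSeparator_of_reach_subset (le_of_eq (reachSet_nbhd_self hdXW')) hR'S, ?_⟩
        rw [Set.disjoint_left]; intro a ha hax; exact ha.1 (hXR' hax)
      set Nu := setNbhd G (R' ∪ Rm) with hNu
      set Ni := setNbhd G (R' ∩ Rm) with hNi
      have hsubmod := setNbhd_submodular G R' Rm
      rw [← hNu, ← hNi, ← hNR'def, ← hWmdef] at hsubmod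
      have hNiSsep : Ni ∈ Ssep := by
        refine ⟨isSeparator_of_reach_subset
          (reachSet_nbhd_subset (fun a ha => ⟨hXR' ha.1, hXRm ha.1⟩)) ?_, ?_⟩
        · rw [Set.eq_empty_iff_forall_notMem]
          rintro s ⟨⟨hs1, _⟩, hs2⟩
          exact Set.eq_empty_iff_forall_notMem.1 hR'S s ⟨hs1, hs2⟩
        · rw [Set.disjoint_left]; intro a ha hax; exact ha.1 ⟨hXR' hax, hXRm hax⟩
      have hNilam : lam ≤ Ni.ncard := hminp Ni hNiSsep
      have hNR'lam : NR'.ncard ≤ lam :=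
        le_trans (Set.ncard_le_ncard hNR'sub (Set.toFinite _)) hW'.2
      have hNulam : Nu.ncard ≤ lam := by omega
      have hreachNu : reachSet G Nu X = R' ∪ Rm := reachSet_nbhd_union hdXW' hdXWb
      have hNuSsep : Nu ∈ Slam := by
        refine ⟨⟨isSeparator_of_reach_subset (le_of_eq hreachNu) ?_, ?_⟩, hNulam⟩
        · rw [Set.eq_empty_iff_forall_notMem]
          rintro s ⟨hs1 | hs1, hs2⟩
          · exact Set.eq_empty_iff_forall_notMem.1 hR'S s ⟨hs1, hs2⟩
          · exact Set.eq_empty_iff_forall_notMem.1 hRmS s ⟨hs1, hs2⟩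
        · rw [Set.disjoint_left]; intro a ha hax; exact ha.1 (Or.inr (hXRm hax))
      have hle := hmax Nu hNuSsep
      simp only [hreachNu] at hle
      have heq : Rm = R' ∪ Rm := Set.eq_of_subset_of_ncard_le
        Set.subset_union_right hle (Set.toFinite _)
      intro a ha
      rw [heq]
      exact Or.inl ha
    -- (E) key: every important separator's reach contains Rm
    have hE : ∀ W ∈ ImpFam G X S p, Rm ⊆ reachSet G W X := by
      intro W hW
      set R := reachSet G W X with hRdef
      have hdXW : Disjoint X W := hW.2.2.symm
      have hXR : X ⊆ R := subset_reachSet_of_disjoint hdXW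
      have hNReq : setNbhd G R = W := important_nbhd_reach hW.1 hW.2.2
      set Nu := setNbhd G (R ∪ Rm) with hNu
      set Ni := setNbhd G (R ∩ Rm) with hNi
      have hsubmod := setNbhd_submodular G R Rm
      rw [← hNu, ← hNi, ← hWmdef, hNReq] at hsubmod
      have hRS : R ∩ S = ∅ := sep_reach_disjoint_S hW.1.1
      have hNiSsep : Ni ∈ Ssep := by
        refine ⟨isSeparator_of_reach_subset
          (reachSet_nbhd_subset (fun a ha => ⟨hXR ha.1, hXRm ha.1⟩)) ?_, ?_⟩
        · rw [Set.eq_empty_iff_forall_notMem]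
          rintro s ⟨⟨hs1, _⟩, hs2⟩
          exact Set.eq_empty_iff_forall_notMem.1 hRS s ⟨hs1, hs2⟩
        · rw [Set.disjoint_left]; intro a ha hax; exact ha.1 ⟨hXR hax, hXRm hax⟩
      have hNilam : lam ≤ Ni.ncard := hminp Ni hNiSsep
      have hNuW : Nu.ncard ≤ W.ncard := by omega
      have hreachNu : reachSet G Nu X = R ∪ Rm := reachSet_nbhd_union hdXW hdXWb
      have hNusep : IsSeparator G X S Nu := by
        refine isSeparator_of_reach_subset (le_of_eq hreachNu) ?_
        rw [Set.eq_empty_iff_forall_notMem]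
        rintro s ⟨hs1 | hs1, hs2⟩
        · exact Set.eq_empty_iff_forall_notMem.1 hRS s ⟨hs1, hs2⟩
        · exact Set.eq_empty_iff_forall_notMem.1 hRmS s ⟨hs1, hs2⟩
      have hnotss := hW.1.2.2 Nu hNusep hNuW
      rw [hreachNu] at hnotss
      intro a ha
      by_contra haR
      exact hnotss ⟨Set.subset_union_left, fun hsub => haR (hsub (Or.inr ha))⟩
    -- case on Wm empty or not
    rcases Set.eq_empty_or_nonempty Wm with hWmE | ⟨v, hvWm⟩
    · have hsub : ImpFam G X S p ⊆ {∅} := by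
        intro W hW
        have hsepE : IsSeparator G X S ∅ := by
          have := hWmSsep.1; rwa [hWmE] at this
        have := hW.1.2.1 ∅ (Set.empty_subset W) hsepE
        simp [← this]
      calc (ImpFam G X S p).ncard ≤ ({∅} : Set (Set V)).ncard :=
            Set.ncard_le_ncard hsub (Set.toFinite _)
        _ = 1 := Set.ncard_singleton _
        _ ≤ 2^(μ+1) := Nat.one_le_two_pow
    · -- branching on v
      obtain ⟨hvRm, u, huRm, hadjuv⟩ := hvWm
      have hvX : v ∉ X := fun hc => hvRm (hXRm hc)
      set X'' := insert v Rm with hX''def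
      have hXX'' : X ⊆ X'' := fun a ha => Set.mem_insert_of_mem _ (hXRm ha)
      have hwconnX'' : WConn G X'' :=
        wconn_insert_adj (wconn_reachSet hconn hdXWb) huRm hadjuv
      have hlam_lb : 2*p ≤ (μ+1) + lam := hmin Wmin hWmin.1 hWmin.2
      -- branch 2 family bound
      have hmin'' : ∀ W', IsSeparator G X'' S W' → Disjoint W' X'' →
          2*p ≤ μ + W'.ncard := by
        intro W' hsep' hd'
        have hlam1 : lam + 1 ≤ W'.ncard := by
          by_contra hlt
          push_neg at hlt
          have hW'lam : W'.ncard ≤ lam := by omega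
          set R' := reachSet G W' X'' with hR'def
          have hX''R' : X'' ⊆ R' := subset_reachSet_of_disjoint hd'.symm
          set NR' := setNbhd G R' with hNR'def
          have hNR'W' : NR' ⊆ W' := setNbhd_reachSet_subset
          have hR'S : R' ∩ S = ∅ := sep_reach_disjoint_S hsep'
          have hNR'Slam : NR' ∈ Slam := by
            refine ⟨⟨isSeparator_of_reach_subset
              (reachSet_nbhd_subset (fun a ha => hX''R' (hXX'' ha.1))) hR'S, ?_⟩, ?_⟩
            · rw [Set.disjoint_left]; intro a ha hax
              exact ha.1 (hX''R' (hXX'' hax))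
            · exact le_trans (Set.ncard_le_ncard hNR'W' (Set.toFinite _)) hW'lam
          have hvreach : v ∈ reachSet G NR' X := by
            obtain ⟨x, hx⟩ := hne
            obtain ⟨w, hw⟩ := hwconnX'' x (hXX'' hx) v (Set.mem_insert _ _)
            refine ⟨x, ⟨hx, fun hc => hc.1 (hX''R' (hXX'' hx))⟩,
              reachAvoid_iff_walk.2 ⟨w, fun a ha hc => hc.1 (hX''R' (hw a ha))⟩⟩
          exact hvRm (hD NR' hNR'Slam hvreach)
        omega
      have hb2 : ({W ∈ ImpFam G X S p | v ∉ W}).ncard ≤ 2^μ := by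
        have hsub2 : {W ∈ ImpFam G X S p | v ∉ W} ⊆ ImpFam G X'' S p := by
          rintro W ⟨hW, hvW⟩
          have hRmR : Rm ⊆ reachSet G W X := hE W hW
          have hvR : v ∈ reachSet G W X := reachSet_adj (hRmR huRm) hadjuv hvW
          have hX''R : X'' ⊆ reachSet G W X := Set.insert_subset hvR hRmR
          refine ⟨important_enlarge hW.1 hW.2.2 hXX'' hX''R, hW.2.1, ?_⟩
          rw [Set.disjoint_left]
          intro a ha hax
          exact reachSet_not_mem (hX''R hax) ha
        exact le_trans (Set.ncard_le_ncard hsub2 (Set.toFinite _))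
          (ih G X'' S p ⟨v, Set.mem_insert _ _⟩ hwconnX'' hmin'')
      have hb1 : ({W ∈ ImpFam G X S p | v ∈ W}).ncard ≤ 2^μ := by
        set A1 := {W ∈ ImpFam G X S p | v ∈ W} with hA1def
        have himg : (fun W => W \ {v}) '' A1 ⊆ ImpFam (Gdel G v) X S (p-1) := by
          rintro _ ⟨W, ⟨hW, hvW⟩, rfl⟩
          show W \ {v} ∈ ImpFam (Gdel G v) X S (p-1)
          refine ⟨important_del hvX hvW hW.1, ?_, ?_⟩
          · have e1 : (W \ {v}).ncard + 1 = W.ncard := Set.ncard_diff_singleton_add_one hvW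
            have hp1 : 1 ≤ p := by
              have := hW.2.1
              rcases Nat.eq_zero_or_pos p with rfl | hp
              · exfalso
                have : W.ncard = 0 := by omega
                rw [(Set.ncard_eq_zero (Set.toFinite W)).1 this] at hvW
                exact hvW
              · exact hp
            have := hW.2.1
            omega
          · exact Set.disjoint_of_subset_left Set.diff_subset hW.2.2
        have hwconn' : WConn (Gdel G v) X := by
          intro a ha b hb
          obtain ⟨w, hw⟩ := hconn a ha b hb
          exact walk_transfer (G₁ := G) (G₂ := Gdel G v) (P := X) (fun a' b' ha' hb' hab =>
            (show G.Adj a' b' ∧ a' ≠ v ∧ b' ≠ v from ⟨hab, fun hc => hvX (hc ▸ ha'), fun hc => hvX (hc ▸ hb')⟩)) w hw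
        have hmin''' : ∀ W'', IsSeparator (Gdel G v) X S W'' → Disjoint W'' X →
            2*(p-1) ≤ μ + W''.ncard := by
          intro W'' hsep'' hd''
          have h1 : IsSeparator G X S (W'' ∪ {v}) := sep_del_to hvX hsep''
          have h2 : Disjoint (W'' ∪ {v}) X := by
            rw [Set.disjoint_union_left]
            exact ⟨hd'', Set.disjoint_left.2 (by rintro a rfl hc; exact hvX hc)⟩
          have h3 := hmin _ h1 h2
          have h4 : (W'' ∪ {v}).ncard ≤ W''.ncard + 1 := by
            have := Set.ncard_union_le W'' ({v} : Set V)
            simpa using this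
          omega
        have hinj : Set.InjOn (fun W => W \ {v}) A1 := by
          rintro W₁ ⟨_, hv1⟩ W₂ ⟨_, hv2⟩ heq
          simp only at heq
          ext a
          by_cases hav : a = v
          · subst hav; simp [hv1, hv2]
          · constructor
            · intro ha
              have : a ∈ W₁ \ {v} := ⟨ha, hav⟩
              rw [heq] at this; exact this.1
            · intro ha
              have : a ∈ W₂ \ {v} := ⟨ha, hav⟩
              rw [← heq] at this; exact this.1
        calc A1.ncard = ((fun W => W \ {v}) '' A1).ncard :=
              (Set.ncard_image_of_injOn hinj).symm
          _ ≤ (ImpFam (Gdel G v) X S (p-1)).ncard :=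
              Set.ncard_le_ncard himg (Set.toFinite _)
          _ ≤ 2^μ := ih (Gdel G v) X S (p-1) hne hwconn' hmin'''
      have hsplit : ImpFam G X S p ⊆
          {W ∈ ImpFam G X S p | v ∈ W} ∪ {W ∈ ImpFam G X S p | v ∉ W} := by
        intro W hW
        by_cases hv : v ∈ W
        · exact Or.inl ⟨hW, hv⟩
        · exact Or.inr ⟨hW, hv⟩
      calc (ImpFam G X S p).ncard
          ≤ ({W ∈ ImpFam G X S p | v ∈ W} ∪ {W ∈ ImpFam G X S p | v ∉ W}).ncard :=
            Set.ncard_le_ncard hsplit (Set.toFinite _)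
        _ ≤ ({W ∈ ImpFam G X S p | v ∈ W}).ncard
            + ({W ∈ ImpFam G X S p | v ∉ W}).ncard := Set.ncard_union_le _ _
        _ ≤ 2^μ + 2^μ := by exact Nat.add_le_add hb1 hb2
        _ = 2^(μ+1) := by ring

end Counting

section ChipExists

variable [Fintype V] [DecidableEq V]
variable {G : SimpleGraph V} {S D : Set V} {k : ℕ}

/-- Every connected set avoiding `S` with small boundary is contained in a maximal chip. -/
lemma exists_maximalChip (G : SimpleGraph V) (k : ℕ) (S D : Set V)
    (hne : D.Nonempty) (hconn : WConn G D) (hDS : D ∩ S = ∅)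
    (hND : (setNbhd G D).ncard ≤ 3 * k) :
    ∃ C ∈ maximalChips G k S, D ⊆ C := by
  classical
  -- candidate separators
  set Wfam := {W : Set V | IsSeparator G D S W ∧ W.ncard ≤ 3 * k ∧ Disjoint W D}
    with hWfam
  have hND_closed : ∀ u ∈ D, ∀ z, G.Adj u z → z ∉ setNbhd G D → z ∈ D := by
    intro u hu z haz hz
    by_contra hzD
    exact hz ⟨hzD, u, hu, haz⟩
  have hNDsep : setNbhd G D ∈ Wfam := by
    refine ⟨?_, hND, Set.disjoint_left.2 (fun a ha hc => ha.1 hc)⟩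
    apply isSeparator_of_reach_subset (R := D) _ hDS
    exact reachSet_subset_closed hND_closed Set.diff_subset
  obtain ⟨Wb, hWb, hmax⟩ := Set.exists_max_image Wfam
    (fun W => (reachSet G W D).ncard) (Set.toFinite _) ⟨_, hNDsep⟩
  set Cs := reachSet G Wb D with hCs
  set Ws := setNbhd G Cs with hWs
  have hdDWb : Disjoint D Wb := hWb.2.2.symm
  have hDCs : D ⊆ Cs := subset_reachSet_of_disjoint hdDWb
  have hWsWb : Ws ⊆ Wb := setNbhd_reachSet_subset
  have hreachWs : reachSet G Ws D = Cs := reachSet_nbhd_self hdDWb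
  have hCsS : Cs ∩ S = ∅ := sep_reach_disjoint_S hWb.1
  have hWsfam : Ws ∈ Wfam := by
    refine ⟨isSeparator_of_reach_subset (le_of_eq hreachWs) hCsS,
      le_trans (Set.ncard_le_ncard hWsWb (Set.toFinite _)) hWb.2.1, ?_⟩
    rw [Set.disjoint_left]
    intro a ha hc
    exact ha.1 (hDCs hc)
  have hwconnCs : WConn G Cs := wconn_reachSet hconn hdDWb
  have hCsWs : ∀ a ∈ Cs, a ∉ Ws := fun a ha hc => hc.1 ha
  -- reach from Cs avoiding Ws is Cs
  have hreachCsWs : reachSet G Ws Cs = Cs := by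
    rw [← hreachWs, reachSet_reachSet, hreachWs]
  -- reach from D avoiding any W₂ disjoint from Cs contains reach from Cs
  have hkey : ∀ W₂ : Set V, Disjoint Cs W₂ → reachSet G W₂ Cs ⊆ reachSet G W₂ D := by
    intro W₂ hd
    rintro y ⟨x, hx, hr⟩
    obtain ⟨d, hd0⟩ := hne
    obtain ⟨w, hw⟩ := hwconnCs d (hDCs hd0) x hx.1
    have hra : ReachAvoid G W₂ d x := reachAvoid_iff_walk.2
      ⟨w, fun a ha hc => (hd.ne_of_mem (hw a ha) hc) rfl⟩
    exact ⟨d, ⟨hd0, fun hc => (hd.ne_of_mem (hDCs hd0) hc) rfl⟩, hra.trans hr⟩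
  have hchip : IsChip G k S Cs := by
    refine ⟨connected_of_wconn (hne.mono hDCs) hwconnCs, hWsfam.2.1, ?_, ?_, ?_⟩
    · -- separator
      exact isSeparator_of_reach_subset (le_of_eq hreachCsWs) hCsS
    · -- minimality
      intro W'' hsub hsep
      by_contra hne''
      have hssub : W'' ⊂ Ws := Set.ssubset_iff_subset_ne.2 ⟨hsub, hne''⟩
      obtain ⟨wv, hwvWs, hwvW''⟩ := Set.exists_of_ssubset hssub
      obtain ⟨hwvCs, c, hcCs, hadj⟩ := hwvWs
      have hW''fam : W'' ∈ Wfam := by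
        refine ⟨?_, le_trans (Set.ncard_le_ncard hsub (Set.toFinite _)) hWsfam.2.1, ?_⟩
        · intro x hx y hy hr
          exact hsep x ⟨hDCs hx.1, hx.2⟩ y hy hr
        · exact Set.disjoint_of_subset_left hsub (Set.disjoint_left.2
            (fun a ha hc => hCsWs a (hDCs hc) ha))
      have hCssub : Cs ⊆ reachSet G W'' D := by
        rw [← hreachWs]
        exact reachSet_anti hsub
      have hwv_mem : wv ∈ reachSet G W'' D :=
        reachSet_adj (hCssub hcCs) hadj hwvW''
      have hlt : Cs.ncard < (reachSet G W'' D).ncard := by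
        apply Set.ncard_lt_ncard _ (Set.toFinite _)
        exact ⟨hCssub, fun hsub2 => (hCsWs wv (hsub2 hwv_mem)) ⟨hwvCs, c, hcCs, hadj⟩⟩
      have := hmax W'' hW''fam
      have := hmax Ws hWsfam
      omega
    · -- importance (cond 3)
      intro W₂ hsep hcard hss
      rw [hreachCsWs] at hss
      have hd : Disjoint Cs W₂ := by
        rw [Set.disjoint_left]
        intro a ha hc
        exact reachSet_not_mem (subset_of_ssubset hss ha) hc
      have hW₂fam : W₂ ∈ Wfam := by
        refine ⟨?_, le_trans hcard hWsfam.2.1, ?_⟩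
        · intro x hx y hy hr
          exact hsep x ⟨hDCs hx.1, hx.2⟩ y hy hr
        · exact Set.disjoint_left.2 (fun a ha hc => (hd.ne_of_mem (hDCs hc) ha) rfl)
      have hsub2 : reachSet G W₂ Cs ⊆ reachSet G W₂ D := hkey W₂ hd
      have hlt : Cs.ncard < (reachSet G W₂ D).ncard := by
        apply Set.ncard_lt_ncard _ (Set.toFinite _)
        refine ⟨le_trans (subset_of_ssubset hss) hsub2, ?_⟩
        intro hsub3
        obtain ⟨a, haR, haC⟩ := Set.exists_of_ssubset hss
        exact haC (hsub3 (hsub2 haR))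
      have := hmax W₂ hW₂fam
      have := hmax Wb hWb
      omega
  -- pass to a maximal chip
  set Kfam := {C' : Set V | IsChip G k S C' ∧ Cs ⊆ C'} with hKfam
  obtain ⟨Cm, hCm, hCmax⟩ := Set.exists_max_image Kfam Set.ncard (Set.toFinite _)
    ⟨Cs, hchip, Set.Subset.rfl⟩
  refine ⟨Cm, ⟨hCm.1, ?_⟩, hDCs.trans hCm.2⟩
  intro C' hC' hsub
  have hC'K : C' ∈ Kfam := ⟨hC', hCm.2.trans hsub⟩
  exact (Set.eq_of_subset_of_ncard_le hsub (hCmax C' hC'K) (Set.toFinite _)).symm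

end ChipExists

section Assembly

lemma ncard_biUnion_le_mul {α β : Type*} [Finite β] {s : Set α}
    (f : α → Set β) (m : ℕ) (hs : s.Finite) (h : ∀ x ∈ s, (f x).ncard ≤ m) :
    (⋃ x ∈ s, f x).ncard ≤ s.ncard * m := by
  refine Set.Finite.induction_on (motive := fun s _ => (∀ x ∈ s, (f x).ncard ≤ m) →
    (⋃ x ∈ s, f x).ncard ≤ s.ncard * m) s hs (by simp) (fun {a t} hat htf ihc => ?_) h
  intro hbound
  have h1 : (⋃ x ∈ insert a t, f x) = f a ∪ ⋃ x ∈ t, f x := by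
    simp [Set.biUnion_insert]
  rw [h1, Set.ncard_insert_of_notMem hat htf]
  calc (f a ∪ ⋃ x ∈ t, f x).ncard ≤ (f a).ncard + (⋃ x ∈ t, f x).ncard :=
        Set.ncard_union_le _ _
    _ ≤ m + t.ncard * m := Nat.add_le_add (hbound a (Set.mem_insert _ _))
        (ihc (fun x hx => hbound x (Set.mem_insert_of_mem _ hx)))
    _ = (t.ncard + 1) * m := by ring

variable [Fintype V] [DecidableEq V]

/-- A walk avoiding `A ∩ B` starting on the `B`-side stays on the `B`-side. -/
lemma walk_stay_side {G : SimpleGraph V} {A B : Set V} (hU : A ∪ B = Set.univ)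
    (hna : ∀ a ∈ A \ B, ∀ b ∈ B \ A, ¬ G.Adj a b) :
    ∀ {x y : V} (w : G.Walk x y), (∀ z ∈ w.support, z ∉ A ∩ B) →
      x ∈ B \ A → y ∈ B \ A := by
  intro x y w
  induction w with
  | nil => intro _ hx; exact hx
  | @cons a b c hab p ih =>
    intro hsup hx
    have hbmem : b ∈ A ∪ B := hU ▸ Set.mem_univ b
    have hbAB : b ∉ A ∩ B := hsup b (by simp [SimpleGraph.Walk.support_cons])
    have hbBA : b ∈ B \ A := by
      rcases hbmem with hbA | hbB
      · by_cases hbB : b ∈ B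
        · exact absurd ⟨hbA, hbB⟩ hbAB
        · exact absurd hab.symm (hna b ⟨hbA, hbB⟩ a hx)
      · by_cases hbA : b ∈ A
        · exact absurd ⟨hbA, hbB⟩ hbAB
        · exact ⟨hbB, hbA⟩
    exact ih (fun z hz => hsup z (by simp [SimpleGraph.Walk.support_cons, hz])) hbBA

lemma side_bound (G : SimpleGraph V) (k : ℕ) (S : Set V) (A B : Set V)
    (hU : A ∪ B = Set.univ)
    (hna : ∀ a ∈ A \ B, ∀ b ∈ B \ A, ¬ G.Adj a b)
    (hord : (A ∩ B).ncard ≤ k)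
    (hSB : ((B \ A) ∩ S).ncard ≤ 2 * k) :
    ((B \ A) ∩ chipBag G k S).ncard ≤ (3 * k) ^ 2 * 8 ^ (3 * k) + 2 * k := by
  classical
  set P := (B \ A) \ S with hP
  -- (*) every vertex of P lies in a maximal chip containing its P-component
  have hstar : ∀ v ∈ P, ∃ C ∈ maximalChips G k S, reachSet G Pᶜ {v} ⊆ C := by
    intro v hv
    set D := reachSet G Pᶜ {v} with hD
    have hvD : v ∈ D := mem_reachSet_self rfl (by simpa using hv)
    have hDP : D ⊆ P := by
      intro a ha
      have := reachSet_not_mem ha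
      simpa using this
    have hwconn : WConn G D :=
      wconn_reachSet wconn_singleton (by simp [Set.disjoint_left, hv])
    have hDS : D ∩ S = ∅ := by
      rw [Set.eq_empty_iff_forall_notMem]
      rintro s ⟨hsD, hsS⟩
      exact (hDP hsD).2 hsS
    have hND : setNbhd G D ⊆ (A ∩ B) ∪ ((B \ A) ∩ S) := by
      rintro u ⟨huD, z, hzD, hadj⟩
      have huP : u ∉ P := fun hc => huD (reachSet_adj hzD hadj (by simpa using hc))
      have hzBA : z ∈ B \ A := (hDP hzD).1
      have huAB : u ∉ A \ B := fun hc => hna u hc z hzBA hadj.symm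
      have humem : u ∈ A ∪ B := hU ▸ Set.mem_univ u
      rcases humem with huA | huB
      · by_cases huB : u ∈ B
        · exact Or.inl ⟨huA, huB⟩
        · exact absurd ⟨huA, huB⟩ huAB
      · by_cases huA : u ∈ A
        · exact Or.inl ⟨huA, huB⟩
        · have huS : u ∈ S := by
            by_contra huS
            exact huP ⟨⟨huB, huA⟩, huS⟩
          exact Or.inr ⟨⟨huB, huA⟩, huS⟩
    have hNDcard : (setNbhd G D).ncard ≤ 3 * k := by
      calc (setNbhd G D).ncard ≤ ((A ∩ B) ∪ ((B \ A) ∩ S)).ncard :=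
            Set.ncard_le_ncard hND (Set.toFinite _)
        _ ≤ (A ∩ B).ncard + ((B \ A) ∩ S).ncard := Set.ncard_union_le _ _
        _ ≤ k + 2 * k := Nat.add_le_add hord hSB
        _ = 3 * k := by ring
    obtain ⟨C, hC, hDC⟩ := exists_maximalChip G k S D ⟨v, hvD⟩ hwconn hDS hNDcard
    exact ⟨C, hC, hDC⟩
  -- the interesting chips
  set CK := {C ∈ maximalChips G k S | (C ∩ (A ∩ B)).Nonempty} with hCK
  -- main inclusion
  have hincl : (B \ A) ∩ chipBag G k S ⊆
      ((B \ A) ∩ S) ∪ ⋃ C ∈ CK, setNbhd G C := by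
    rintro v ⟨hvBA, hvbag⟩
    by_cases hvS : v ∈ S
    · exact Or.inl ⟨hvBA, hvS⟩
    have hvP : v ∈ P := ⟨hvBA, hvS⟩
    rcases hvbag with hInt | hUn
    · -- v in the intersection part: impossible
      exfalso
      obtain ⟨C, hC, hDC⟩ := hstar v hvP
      have hvC : v ∈ C := hDC (mem_reachSet_self rfl (by simpa using hvP))
      have := Set.mem_iInter₂.1 hInt C hC
      exact this (Or.inl hvC)
    · obtain ⟨C₀, hC₀, hvN⟩ := Set.mem_iUnion₂.1 hUn
      by_cases hK : (C₀ ∩ (A ∩ B)).Nonempty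
      · exact Or.inr (Set.mem_iUnion₂.2 ⟨C₀, ⟨hC₀, hK⟩, hvN⟩)
      exfalso
      rw [Set.not_nonempty_iff_eq_empty] at hK
      have hC₀S : C₀ ∩ S = ∅ := chip_disjoint_S hC₀.1
      obtain ⟨hvC₀, u, huC₀, hadjuv⟩ := hvN
      have huAB : u ∉ A \ B := fun hc => hna u hc v hvBA hadjuv
      have huBA : u ∈ B \ A := by
        have humem : u ∈ A ∪ B := hU ▸ Set.mem_univ u
        have huni : u ∉ A ∩ B := fun hc => (Set.eq_empty_iff_forall_notMem.1 hK) u ⟨huC₀, hc⟩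
        rcases humem with huA | huB
        · by_cases huB : u ∈ B
          · exact absurd ⟨huA, huB⟩ huni
          · exact absurd ⟨huA, huB⟩ huAB
        · by_cases huA : u ∈ A
          · exact absurd ⟨huA, huB⟩ huni
          · exact ⟨huB, huA⟩
      have hwconnC₀ : WConn G C₀ := chip_wconn hC₀.1
      have hC₀P : C₀ ⊆ P := by
        intro c hc
        obtain ⟨w, hw⟩ := hwconnC₀ u huC₀ c hc
        have hcBA : c ∈ B \ A := walk_stay_side hU hna w
          (fun z hz hzAB => (Set.eq_empty_iff_forall_notMem.1 hK) z ⟨hw z hz, hzAB⟩) huBA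
        refine ⟨hcBA, ?_⟩
        intro hcS
        exact (Set.eq_empty_iff_forall_notMem.1 hC₀S) c ⟨hc, hcS⟩
      have huP : u ∈ P := hC₀P huC₀
      -- C₀ ∪ {v} is inside the reach set of v in P
      set D := reachSet G Pᶜ {v} with hD
      have hvD : v ∈ D := mem_reachSet_self rfl (by simpa using hvP)
      have huD : u ∈ D := reachSet_adj hvD hadjuv.symm (by simpa using huP)
      have hC₀D : C₀ ⊆ D := by
        intro c hc
        obtain ⟨w, hw⟩ := hwconnC₀ u huC₀ c hc
        have hra : ReachAvoid G Pᶜ u c := reachAvoid_iff_walk.2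
          ⟨w, fun z hz hzc => (by simpa using hzc : z ∉ P) (hC₀P (hw z hz))⟩
        obtain ⟨x, hx, hrvu⟩ := huD
        exact ⟨x, hx, hrvu.trans hra⟩
      obtain ⟨Cm, hCm, hDCm⟩ := hstar v hvP
      have : Cm = C₀ := hC₀.2 Cm hCm.1 (hC₀D.trans hDCm)
      exact hvC₀ (this ▸ hDCm hvD)
  -- counting
  have hfam_bound : ∀ t ∈ A ∩ B,
      ({C ∈ maximalChips G k S | t ∈ C}).ncard ≤ 2 ^ (6 * k) := by
    intro t _
    set Fam := {C ∈ maximalChips G k S | t ∈ C} with hFam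
    have himg : (setNbhd G ·) '' Fam ⊆ ImpFam G {t} S (3 * k) := by
      rintro _ ⟨C, ⟨hC, htC⟩, rfl⟩
      refine ⟨chip_important_singleton hC.1 htC, hC.1.2.1, ?_⟩
      rw [Set.disjoint_left]
      rintro a ha rfl
      exact ha.1 htC
    have hinj : Set.InjOn (setNbhd G ·) Fam := by
      rintro C₁ ⟨hC₁, ht₁⟩ C₂ ⟨hC₂, ht₂⟩ heq
      have e1 := chip_reach_eq hC₁.1 ht₁
      have e2 := chip_reach_eq hC₂.1 ht₂
      rw [← e1, ← e2]
      simp only at heq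
      rw [heq]
    calc Fam.ncard = ((setNbhd G ·) '' Fam).ncard := (Set.ncard_image_of_injOn hinj).symm
      _ ≤ (ImpFam G {t} S (3 * k)).ncard := Set.ncard_le_ncard himg (Set.toFinite _)
      _ ≤ 2 ^ (6 * k) := by
          apply impFam_card (6 * k) G {t} S (3 * k) ⟨t, rfl⟩ wconn_singleton
          intro W' _ _
          omega
  have hCKsub : CK ⊆ ⋃ t ∈ A ∩ B, {C ∈ maximalChips G k S | t ∈ C} := by
    rintro C ⟨hC, t, htC, htAB⟩
    exact Set.mem_iUnion₂.2 ⟨t, htAB, hC, htC⟩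
  have hCKcard : CK.ncard ≤ k * 2 ^ (6 * k) := by
    calc CK.ncard ≤ (⋃ t ∈ A ∩ B, {C ∈ maximalChips G k S | t ∈ C}).ncard :=
          Set.ncard_le_ncard hCKsub (Set.toFinite _)
      _ ≤ (A ∩ B).ncard * 2 ^ (6 * k) :=
          ncard_biUnion_le_mul _ _ (Set.toFinite _) hfam_bound
      _ ≤ k * 2 ^ (6 * k) := Nat.mul_le_mul_right _ hord
  have hUnion_card : (⋃ C ∈ CK, setNbhd G C).ncard ≤ (k * 2 ^ (6 * k)) * (3 * k) := by
    calc (⋃ C ∈ CK, setNbhd G C).ncard ≤ CK.ncard * (3 * k) :=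
          ncard_biUnion_le_mul _ _ (Set.toFinite _) (fun C hC => hC.1.1.2.1)
      _ ≤ (k * 2 ^ (6 * k)) * (3 * k) := Nat.mul_le_mul_right _ hCKcard
  have harith : (k * 2 ^ (6 * k)) * (3 * k) ≤ (3 * k) ^ 2 * 8 ^ (3 * k) := by
    have h8 : (8 : ℕ) ^ (3 * k) = 2 ^ (9 * k) := by
      rw [show (8 : ℕ) = 2 ^ 3 by norm_num, ← pow_mul]
      ring_nf
    rw [h8]
    have hpow : (2 : ℕ) ^ (6 * k) ≤ 2 ^ (9 * k) :=
      Nat.pow_le_pow_right (by norm_num) (by omega)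
    calc (k * 2 ^ (6 * k)) * (3 * k) = (3 * (k * k)) * 2 ^ (6 * k) := by ring
      _ ≤ (9 * (k * k)) * 2 ^ (9 * k) :=
          Nat.mul_le_mul (by omega) hpow
      _ = (3 * k) ^ 2 * 2 ^ (9 * k) := by ring
  calc ((B \ A) ∩ chipBag G k S).ncard
      ≤ (((B \ A) ∩ S) ∪ ⋃ C ∈ CK, setNbhd G C).ncard :=
        Set.ncard_le_ncard hincl (Set.toFinite _)
    _ ≤ ((B \ A) ∩ S).ncard + (⋃ C ∈ CK, setNbhd G C).ncard := Set.ncard_union_le _ _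
    _ ≤ 2 * k + (k * 2 ^ (6 * k)) * (3 * k) := Nat.add_le_add hSB hUnion_card
    _ ≤ 2 * k + (3 * k) ^ 2 * 8 ^ (3 * k) := Nat.add_le_add_left harith _
    _ = (3 * k) ^ 2 * 8 ^ (3 * k) + 2 * k := by ring

end Assembly

/-- the set `A` is `(τ,k)`-unbreakable (Lemma `A-unbreakable`). -/
theorem chipBag_unbreakable {V : Type*} [Fintype V] [DecidableEq V]
    (G : SimpleGraph V) (hG : G.Connected) (k : ℕ) (hk : 0 < k) (S : Set V)
    (hS : Unbreakable G S (2 * k) k) :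
    Unbreakable G (chipBag G k S) ((3 * k) ^ 2 * 8 ^ (3 * k) + 2 * k) k := by
  intro A B hU hna hord
  rcases hS A B hU hna hord with h | h
  · left
    exact side_bound G k S B A (by rw [Set.union_comm]; exact hU)
      (fun a ha b hb hAdj => hna b hb a ha hAdj.symm)
      (by rw [Set.inter_comm]; exact hord) h
  · right
    exact side_bound G k S A B hU hna hord h
end
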